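/- arXiv:1810.01659 — 5 statements merged into one kernel-verified Lean document; each statement's English description precedes it below -/
import Mathlib

section
/- Let ψ : ℝ³ → ℂ⁴ be differentiable at a point x ≠ 0. Then −i(α₁ ∂₁ψ(x) + α₂ ∂₂ψ(x) + α₃ ∂₃ψ(x)) = −i (Σⱼ αⱼ xⱼ/|x|) · (∂_rψ(x) + ψ(x)/|x| − (ψ(x) + (2S·Lψ)(x))/|x|); that is, the Dirac operator factorizes as −iα·∇ = −i(α·x/|x|)(∂_r + 1/|x| − (1 + 2S·L)/|x|) away from the origin. -/
open MeasureTheory Real Filter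

noncomputable section

abbrev E3 := EuclideanSpace ℝ (Fin 3)
abbrev C4 := EuclideanSpace ℂ (Fin 4)

/-- Pauli matrices. -/
def pauli : Fin 3 → Matrix (Fin 2) (Fin 2) ℂ
  | 0 => !![0, 1; 1, 0]
  | 1 => !![0, -Complex.I; Complex.I, 0]
  | 2 => !![1, 0; 0, -1]

/-- Dirac matrices αⱼ = [[0, σⱼ], [σⱼ, 0]]. -/
def diracAlpha (j : Fin 3) : Matrix (Fin 4) (Fin 4) ℂ :=
  Matrix.reindex finSumFinEquiv finSumFinEquiv
    (Matrix.fromBlocks 0 (pauli j) (pauli j) 0)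

/-- Dirac matrix β = [[I₂, 0], [0, -I₂]]. -/
def diracBeta : Matrix (Fin 4) (Fin 4) ℂ :=
  Matrix.reindex finSumFinEquiv finSumFinEquiv
    (Matrix.fromBlocks (1 : Matrix (Fin 2) (Fin 2) ℂ) 0 0 (-1 : Matrix (Fin 2) (Fin 2) ℂ))

/-- Block-diagonal matrix diag(σⱼ, σⱼ) (twice the spin angular momentum matrices). -/
def spinMat (j : Fin 3) : Matrix (Fin 4) (Fin 4) ℂ :=
  Matrix.reindex finSumFinEquiv finSumFinEquiv
    (Matrix.fromBlocks (pauli j) 0 0 (pauli j))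

/-- Action of a 4 × 4 matrix on ℂ⁴ with the Euclidean norm. -/
def mulVecE (M : Matrix (Fin 4) (Fin 4) ℂ) (v : C4) : C4 :=
  Matrix.toEuclideanLin M v

/-- The partial derivative ∂ⱼψ(x). -/
def pderiv3 (j : Fin 3) (ψ : E3 → C4) (x : E3) : C4 :=
  fderiv ℝ ψ x (EuclideanSpace.single j 1)

/-- The free Dirac operator (-iα·∇ψ)(x). -/
def diracD (ψ : E3 → C4) (x : E3) : C4 :=
  (-Complex.I) • ∑ j : Fin 3, mulVecE (diracAlpha j) (pderiv3 j ψ x)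

/-- The radial derivative ∂_rψ(x) = Σⱼ (xⱼ/|x|) ∂ⱼψ(x). -/
def radialDeriv (ψ : E3 → C4) (x : E3) : C4 :=
  ∑ j : Fin 3, (x j / ‖x‖) • pderiv3 j ψ x

/-- The orbital angular momentum (Lⱼψ)(x) = -i (x × ∇)ⱼ ψ(x). -/
def angMom (j : Fin 3) (ψ : E3 → C4) (x : E3) : C4 :=
  (-Complex.I) • ((x (j + 1)) • pderiv3 (j + 2) ψ x - (x (j + 2)) • pderiv3 (j + 1) ψ x)

/-- The spin-orbit term (2S·Lψ)(x) = Σⱼ diag(σⱼ,σⱼ) (Lⱼψ)(x). -/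
def twoSL (ψ : E3 → C4) (x : E3) : C4 :=
  ∑ j : Fin 3, mulVecE (spinMat j) (angMom j ψ x)

lemma mulVecE_apply (M : Matrix (Fin 4) (Fin 4) ℂ) (v : C4) (i : Fin 4) :
    mulVecE M v i = ∑ k, M i k * v k := by
  simp [mulVecE, Matrix.toEuclideanLin, Matrix.mulVec, dotProduct]

lemma alphaM0 : diracAlpha 0 = !![0,0,0,1; 0,0,1,0; 0,1,0,0; 1,0,0,0] := by
  ext i k
  fin_cases i <;> fin_cases k <;>
    simp [diracAlpha, pauli, Matrix.fromBlocks, finSumFinEquiv, Fin.addCases] <;> rfl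

lemma spinM0 : spinMat 0 = !![0,1,0,0; 1,0,0,0; 0,0,0,1; 0,0,1,0] := by
  ext i k
  fin_cases i <;> fin_cases k <;>
    simp [spinMat, pauli, Matrix.fromBlocks, finSumFinEquiv, Fin.addCases] <;> rfl

lemma alphaM1 : diracAlpha 1 = !![0,0,0,-Complex.I; 0,0,Complex.I,0; 0,-Complex.I,0,0; Complex.I,0,0,0] := by
  ext i k
  fin_cases i <;> fin_cases k <;>
    simp [diracAlpha, pauli, Matrix.fromBlocks, finSumFinEquiv, Fin.addCases] <;> rfl

lemma spinM1 : spinMat 1 = !![0,-Complex.I,0,0; Complex.I,0,0,0; 0,0,0,-Complex.I; 0,0,Complex.I,0] := by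
  ext i k
  fin_cases i <;> fin_cases k <;>
    simp [spinMat, pauli, Matrix.fromBlocks, finSumFinEquiv, Fin.addCases] <;> rfl

lemma alphaM2 : diracAlpha 2 = !![0,0,1,0; 0,0,0,-1; 1,0,0,0; 0,-1,0,0] := by
  ext i k
  fin_cases i <;> fin_cases k <;>
    simp [diracAlpha, pauli, Matrix.fromBlocks, finSumFinEquiv, Fin.addCases] <;> rfl

lemma spinM2 : spinMat 2 = !![1,0,0,0; 0,-1,0,0; 0,0,1,0; 0,0,0,-1] := by
  ext i k
  fin_cases i <;> fin_cases k <;>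
    simp [spinMat, pauli, Matrix.fromBlocks, finSumFinEquiv, Fin.addCases] <;> rfl

lemma mulVecE_alpha0_0 (v : C4) : mulVecE (diracAlpha 0) v 0 = v 3 := by
  simp [mulVecE_apply, alphaM0, Fin.sum_univ_four]

lemma mulVecE_alpha0_1 (v : C4) : mulVecE (diracAlpha 0) v 1 = v 2 := by
  simp [mulVecE_apply, alphaM0, Fin.sum_univ_four]

lemma mulVecE_alpha0_2 (v : C4) : mulVecE (diracAlpha 0) v 2 = v 1 := by
  simp [mulVecE_apply, alphaM0, Fin.sum_univ_four]

lemma mulVecE_alpha0_3 (v : C4) : mulVecE (diracAlpha 0) v 3 = v 0 := by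
  simp [mulVecE_apply, alphaM0, Fin.sum_univ_four]

lemma mulVecE_alpha1_0 (v : C4) : mulVecE (diracAlpha 1) v 0 = -(Complex.I * v 3) := by
  simp [mulVecE_apply, alphaM1, Fin.sum_univ_four]

lemma mulVecE_alpha1_1 (v : C4) : mulVecE (diracAlpha 1) v 1 = Complex.I * v 2 := by
  simp [mulVecE_apply, alphaM1, Fin.sum_univ_four]

lemma mulVecE_alpha1_2 (v : C4) : mulVecE (diracAlpha 1) v 2 = -(Complex.I * v 1) := by
  simp [mulVecE_apply, alphaM1, Fin.sum_univ_four]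

lemma mulVecE_alpha1_3 (v : C4) : mulVecE (diracAlpha 1) v 3 = Complex.I * v 0 := by
  simp [mulVecE_apply, alphaM1, Fin.sum_univ_four]

lemma mulVecE_alpha2_0 (v : C4) : mulVecE (diracAlpha 2) v 0 = v 2 := by
  simp [mulVecE_apply, alphaM2, Fin.sum_univ_four]

lemma mulVecE_alpha2_1 (v : C4) : mulVecE (diracAlpha 2) v 1 = -(v 3) := by
  simp [mulVecE_apply, alphaM2, Fin.sum_univ_four]

lemma mulVecE_alpha2_2 (v : C4) : mulVecE (diracAlpha 2) v 2 = v 0 := by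
  simp [mulVecE_apply, alphaM2, Fin.sum_univ_four]

lemma mulVecE_alpha2_3 (v : C4) : mulVecE (diracAlpha 2) v 3 = -(v 1) := by
  simp [mulVecE_apply, alphaM2, Fin.sum_univ_four]

lemma mulVecE_spin0_0 (v : C4) : mulVecE (spinMat 0) v 0 = v 1 := by
  simp [mulVecE_apply, spinM0, Fin.sum_univ_four]

lemma mulVecE_spin0_1 (v : C4) : mulVecE (spinMat 0) v 1 = v 0 := by
  simp [mulVecE_apply, spinM0, Fin.sum_univ_four]

lemma mulVecE_spin0_2 (v : C4) : mulVecE (spinMat 0) v 2 = v 3 := by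
  simp [mulVecE_apply, spinM0, Fin.sum_univ_four]

lemma mulVecE_spin0_3 (v : C4) : mulVecE (spinMat 0) v 3 = v 2 := by
  simp [mulVecE_apply, spinM0, Fin.sum_univ_four]

lemma mulVecE_spin1_0 (v : C4) : mulVecE (spinMat 1) v 0 = -(Complex.I * v 1) := by
  simp [mulVecE_apply, spinM1, Fin.sum_univ_four]

lemma mulVecE_spin1_1 (v : C4) : mulVecE (spinMat 1) v 1 = Complex.I * v 0 := by
  simp [mulVecE_apply, spinM1, Fin.sum_univ_four]

lemma mulVecE_spin1_2 (v : C4) : mulVecE (spinMat 1) v 2 = -(Complex.I * v 3) := by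
  simp [mulVecE_apply, spinM1, Fin.sum_univ_four]

lemma mulVecE_spin1_3 (v : C4) : mulVecE (spinMat 1) v 3 = Complex.I * v 2 := by
  simp [mulVecE_apply, spinM1, Fin.sum_univ_four]

lemma mulVecE_spin2_0 (v : C4) : mulVecE (spinMat 2) v 0 = v 0 := by
  simp [mulVecE_apply, spinM2, Fin.sum_univ_four]

lemma mulVecE_spin2_1 (v : C4) : mulVecE (spinMat 2) v 1 = -(v 1) := by
  simp [mulVecE_apply, spinM2, Fin.sum_univ_four]

lemma mulVecE_spin2_2 (v : C4) : mulVecE (spinMat 2) v 2 = v 2 := by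
  simp [mulVecE_apply, spinM2, Fin.sum_univ_four]

lemma mulVecE_spin2_3 (v : C4) : mulVecE (spinMat 2) v 3 = -(v 3) := by
  simp [mulVecE_apply, spinM2, Fin.sum_univ_four]

lemma mulVecE_smul (a : ℂ) (M : Matrix (Fin 4) (Fin 4) ℂ) (v : C4) :
    mulVecE (a • M) v = a • mulVecE M v := by
  ext i
  simp [mulVecE_apply, Finset.mul_sum, mul_assoc]

lemma mulVecE_add (M N : Matrix (Fin 4) (Fin 4) ℂ) (v : C4) :
    mulVecE (M + N) v = mulVecE M v + mulVecE N v := by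
  ext i
  simp [mulVecE_apply, add_mul, Finset.sum_add_distrib]

lemma I_pow_three : Complex.I ^ 3 = -Complex.I := by
  rw [pow_succ, Complex.I_sq]; ring

set_option maxHeartbeats 1000000 in
/-- factorization of the Dirac operator away from the origin. -/
theorem dirac_op_factorization (ψ : E3 → C4) (x : E3) (hx : x ≠ 0)
    (hd : DifferentiableAt ℝ ψ x) :
    diracD ψ x =
      (-Complex.I) • mulVecE (∑ j : Fin 3, ((x j / ‖x‖ : ℝ) : ℂ) • diracAlpha j)
        (radialDeriv ψ x + ‖x‖⁻¹ • ψ x - ‖x‖⁻¹ • (ψ x + twoSL ψ x)) := by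
  have hr : ‖x‖ ≠ 0 := norm_ne_zero_iff.mpr hx
  have hrc : ((‖x‖ : ℝ) : ℂ) ≠ 0 := by exact_mod_cast hr
  have hsumR : (x 0)^2 + (x 1)^2 + (x 2)^2 = ‖x‖^2 := by
    rw [EuclideanSpace.norm_eq, Real.sq_sqrt (by positivity)]
    simp [Fin.sum_univ_three, sq_abs]
  have hsum : ((x 0 : ℂ))^2 + ((x 1 : ℂ))^2 + ((x 2 : ℂ))^2 = ((‖x‖ : ℝ) : ℂ)^2 := by
    exact_mod_cast congrArg (Complex.ofReal) hsumR
  have h1 : ((‖x‖ : ℝ) : ℂ)^2 * (((‖x‖ : ℝ) : ℂ)⁻¹)^2 = 1 := by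
    rw [← mul_pow, mul_inv_cancel₀ hrc, one_pow]
  ext i
  fin_cases i
  · simp only [diracD, radialDeriv, twoSL, angMom, Fin.sum_univ_three, Fin.isValue,
      Fin.reduceAdd, smul_sub, smul_add, mulVecE_smul, mulVecE_add,
      mulVecE_alpha0_0, mulVecE_alpha0_1, mulVecE_alpha0_2, mulVecE_alpha0_3,
      mulVecE_alpha1_0, mulVecE_alpha1_1, mulVecE_alpha1_2, mulVecE_alpha1_3,
      mulVecE_alpha2_0, mulVecE_alpha2_1, mulVecE_alpha2_2, mulVecE_alpha2_3,
      mulVecE_spin0_0, mulVecE_spin0_1, mulVecE_spin0_2, mulVecE_spin0_3,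
      mulVecE_spin1_0, mulVecE_spin1_1, mulVecE_spin1_2, mulVecE_spin1_3,
      mulVecE_spin2_0, mulVecE_spin2_1, mulVecE_spin2_2, mulVecE_spin2_3,
      PiLp.smul_apply, PiLp.add_apply, PiLp.sub_apply, smul_eq_mul,
      Fin.zero_eta, Fin.mk_one, Fin.reduceFinMk,
      Complex.real_smul, Complex.ofReal_div, Complex.ofReal_inv]
    linear_combination (norm := (ring_nf; simp only [Complex.I_sq, I_pow_three, Complex.I_pow_four]; ring1)) (Complex.I * (pderiv3 0 ψ x 3 - Complex.I * pderiv3 1 ψ x 3 + pderiv3 2 ψ x 2) / ((‖x‖:ℝ):ℂ)^2) * hsum + (Complex.I * (pderiv3 0 ψ x 3 - Complex.I * pderiv3 1 ψ x 3 + pderiv3 2 ψ x 2)) * h1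
  · simp only [diracD, radialDeriv, twoSL, angMom, Fin.sum_univ_three, Fin.isValue,
      Fin.reduceAdd, smul_sub, smul_add, mulVecE_smul, mulVecE_add,
      mulVecE_alpha0_0, mulVecE_alpha0_1, mulVecE_alpha0_2, mulVecE_alpha0_3,
      mulVecE_alpha1_0, mulVecE_alpha1_1, mulVecE_alpha1_2, mulVecE_alpha1_3,
      mulVecE_alpha2_0, mulVecE_alpha2_1, mulVecE_alpha2_2, mulVecE_alpha2_3,
      mulVecE_spin0_0, mulVecE_spin0_1, mulVecE_spin0_2, mulVecE_spin0_3,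
      mulVecE_spin1_0, mulVecE_spin1_1, mulVecE_spin1_2, mulVecE_spin1_3,
      mulVecE_spin2_0, mulVecE_spin2_1, mulVecE_spin2_2, mulVecE_spin2_3,
      PiLp.smul_apply, PiLp.add_apply, PiLp.sub_apply, smul_eq_mul,
      Fin.zero_eta, Fin.mk_one, Fin.reduceFinMk,
      Complex.real_smul, Complex.ofReal_div, Complex.ofReal_inv]
    linear_combination (norm := (ring_nf; simp only [Complex.I_sq, I_pow_three, Complex.I_pow_four]; ring1)) (Complex.I * (pderiv3 0 ψ x 2 + Complex.I * pderiv3 1 ψ x 2 - pderiv3 2 ψ x 3) / ((‖x‖:ℝ):ℂ)^2) * hsum + (Complex.I * (pderiv3 0 ψ x 2 + Complex.I * pderiv3 1 ψ x 2 - pderiv3 2 ψ x 3)) * h1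
  · simp only [diracD, radialDeriv, twoSL, angMom, Fin.sum_univ_three, Fin.isValue,
      Fin.reduceAdd, smul_sub, smul_add, mulVecE_smul, mulVecE_add,
      mulVecE_alpha0_0, mulVecE_alpha0_1, mulVecE_alpha0_2, mulVecE_alpha0_3,
      mulVecE_alpha1_0, mulVecE_alpha1_1, mulVecE_alpha1_2, mulVecE_alpha1_3,
      mulVecE_alpha2_0, mulVecE_alpha2_1, mulVecE_alpha2_2, mulVecE_alpha2_3,
      mulVecE_spin0_0, mulVecE_spin0_1, mulVecE_spin0_2, mulVecE_spin0_3,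
      mulVecE_spin1_0, mulVecE_spin1_1, mulVecE_spin1_2, mulVecE_spin1_3,
      mulVecE_spin2_0, mulVecE_spin2_1, mulVecE_spin2_2, mulVecE_spin2_3,
      PiLp.smul_apply, PiLp.add_apply, PiLp.sub_apply, smul_eq_mul,
      Fin.zero_eta, Fin.mk_one, Fin.reduceFinMk,
      Complex.real_smul, Complex.ofReal_div, Complex.ofReal_inv]
    linear_combination (norm := (ring_nf; simp only [Complex.I_sq, I_pow_three, Complex.I_pow_four]; ring1)) (Complex.I * (pderiv3 0 ψ x 1 - Complex.I * pderiv3 1 ψ x 1 + pderiv3 2 ψ x 0) / ((‖x‖:ℝ):ℂ)^2) * hsum + (Complex.I * (pderiv3 0 ψ x 1 - Complex.I * pderiv3 1 ψ x 1 + pderiv3 2 ψ x 0)) * h1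
  · simp only [diracD, radialDeriv, twoSL, angMom, Fin.sum_univ_three, Fin.isValue,
      Fin.reduceAdd, smul_sub, smul_add, mulVecE_smul, mulVecE_add,
      mulVecE_alpha0_0, mulVecE_alpha0_1, mulVecE_alpha0_2, mulVecE_alpha0_3,
      mulVecE_alpha1_0, mulVecE_alpha1_1, mulVecE_alpha1_2, mulVecE_alpha1_3,
      mulVecE_alpha2_0, mulVecE_alpha2_1, mulVecE_alpha2_2, mulVecE_alpha2_3,
      mulVecE_spin0_0, mulVecE_spin0_1, mulVecE_spin0_2, mulVecE_spin0_3,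
      mulVecE_spin1_0, mulVecE_spin1_1, mulVecE_spin1_2, mulVecE_spin1_3,
      mulVecE_spin2_0, mulVecE_spin2_1, mulVecE_spin2_2, mulVecE_spin2_3,
      PiLp.smul_apply, PiLp.add_apply, PiLp.sub_apply, smul_eq_mul,
      Fin.zero_eta, Fin.mk_one, Fin.reduceFinMk,
      Complex.real_smul, Complex.ofReal_div, Complex.ofReal_inv]
    linear_combination (norm := (ring_nf; simp only [Complex.I_sq, I_pow_three, Complex.I_pow_four]; ring1)) (Complex.I * (pderiv3 0 ψ x 0 + Complex.I * pderiv3 1 ψ x 0 - pderiv3 2 ψ x 1) / ((‖x‖:ℝ):ℂ)^2) * hsum + (Complex.I * (pderiv3 0 ψ x 0 + Complex.I * pderiv3 1 ψ x 0 - pderiv3 2 ψ x 1)) * h1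
end
end

section
/- Let φ : ℝ → ℂ be continuously differentiable with compact support and let R > 0. Then ∫₀^∞ r |φ'(r)|² dr ≥ (1/4) ∫₀^∞ |φ(r) − φ(R)|² / (r (log(r/R))²) dr. -/
open MeasureTheory Real Filter
open Topology

noncomputable section

namespace OneDimLogHardyAux

open Set

/-- squared norm of a complex number in terms of re/im -/
lemma cnormsq (z : ℂ) : ‖z‖ ^ 2 = z.re * z.re + z.im * z.im := by
  rw [← Complex.normSq_apply, Complex.sq_norm]

def LL (R r : ℝ) : ℝ := Real.log (r / R)
def NN (φ : ℝ → ℂ) (R r : ℝ) : ℝ := ‖φ r - φ R‖ ^ 2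
def qq (φ : ℝ → ℂ) (R r : ℝ) : ℝ := NN φ R r / (r * LL R r ^ 2)
def DD (φ : ℝ → ℂ) (R r : ℝ) : ℝ :=
  2 * ((φ r - φ R).re * (deriv φ r).re + (φ r - φ R).im * (deriv φ r).im)
def GG (φ : ℝ → ℂ) (R r : ℝ) : ℝ := NN φ R r / LL R r
def gg (φ : ℝ → ℂ) (R r : ℝ) : ℝ := DD φ R r / LL R r - qq φ R r

variable {φ : ℝ → ℂ} {R r : ℝ}

lemma LL_ne_zero (hR : 0 < R) (hr : 0 < r) (hne : r ≠ R) : LL R r ≠ 0 := by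
  intro h
  rcases Real.log_eq_zero.mp h with h | h | h
  · exact (div_ne_zero hr.ne' hR.ne') h
  · exact hne ((div_eq_one_iff_eq hR.ne').mp h)
  · nlinarith [div_pos hr hR]

lemma hasDerivAt_LL (hR : 0 < R) (hr : 0 < r) : HasDerivAt (LL R) (1 / r) r := by
  have h1 : HasDerivAt (fun x : ℝ => x / R) (1 / R) r := by
    simpa using (hasDerivAt_id r).div_const R
  have h2 := (Real.hasDerivAt_log (div_pos hr hR).ne').comp r h1
  refine h2.congr_deriv ?_
  have := hr.ne'
  have := hR.ne'
  field_simp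

lemma hasDerivAt_NN (hφ : ContDiff ℝ 1 φ) (r : ℝ) :
    HasDerivAt (NN φ R) (DD φ R r) r := by
  have ha : HasDerivAt (fun x => φ x - φ R) (deriv φ r) r :=
    ((hφ.differentiable one_ne_zero r).hasDerivAt).sub_const _
  have hre : HasDerivAt (fun x => (φ x - φ R).re) ((deriv φ r).re) r :=
    Complex.reCLM.hasFDerivAt.comp_hasDerivAt r ha
  have him : HasDerivAt (fun x => (φ x - φ R).im) ((deriv φ r).im) r :=
    Complex.imCLM.hasFDerivAt.comp_hasDerivAt r ha
  have hc : HasDerivAt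
      (fun x => (φ x - φ R).re * (φ x - φ R).re + (φ x - φ R).im * (φ x - φ R).im)
      ((deriv φ r).re * (φ r - φ R).re + (φ r - φ R).re * (deriv φ r).re +
        ((deriv φ r).im * (φ r - φ R).im + (φ r - φ R).im * (deriv φ r).im)) r :=
    (hre.mul hre).add (him.mul him)
  have hNfun : NN φ R = fun x =>
      (φ x - φ R).re * (φ x - φ R).re + (φ x - φ R).im * (φ x - φ R).im :=
    funext fun x => cnormsq _
  rw [hNfun]
  convert hc using 1
  simp [DD]; ring

lemma hasDerivAt_GG (hφ : ContDiff ℝ 1 φ) (hR : 0 < R) (hr : 0 < r) (hne : r ≠ R) :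
    HasDerivAt (GG φ R) (gg φ R r) r := by
  have h := (hasDerivAt_NN (R := R) hφ r).div (hasDerivAt_LL hR hr) (LL_ne_zero hR hr hne)
  have : GG φ R = fun x => NN φ R x / LL R x := rfl
  rw [this]
  refine h.congr_deriv ?_
  have hL := LL_ne_zero hR hr hne
  have := hr.ne'
  unfold gg qq
  field_simp

lemma llb (hR : 0 < R) (hr : 0 < r) : (r - R) ^ 2 ≤ LL R r ^ 2 * max r R ^ 2 := by
  have h1 : Real.log (r / R) ≤ r / R - 1 := Real.log_le_sub_one_of_pos (div_pos hr hR)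
  have h2 : Real.log (R / r) ≤ R / r - 1 := Real.log_le_sub_one_of_pos (div_pos hR hr)
  have h3 : Real.log (R / r) = - Real.log (r / R) := by
    rw [← Real.log_inv]; congr 1; rw [inv_div]
  rcases le_total r R with h | h
  · rw [max_eq_right h]
    have ha : 0 ≤ (R - r) / R := div_nonneg (by linarith) hR.le
    have hb : (R - r) / R ≤ -(LL R r) := by
      have e : r / R - 1 = (r - R) / R := by field_simp
      have : LL R r ≤ (r - R) / R := by rw [← e]; exact h1
      have e2 : (R - r) / R = -((r - R) / R) := by ring
      rw [e2]; linarith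
    have h6 := mul_self_le_mul_self ha hb
    have heq : (R - r) / R * ((R - r) / R) * R ^ 2 = (r - R) ^ 2 := by
      field_simp; ring
    have h7 := mul_le_mul_of_nonneg_right h6 (sq_nonneg R)
    nlinarith [h7, heq]
  · rw [max_eq_left h]
    have ha : 0 ≤ (r - R) / r := div_nonneg (by linarith) hr.le
    have hb : (r - R) / r ≤ LL R r := by
      have e : R / r - 1 = (R - r) / r := by field_simp
      have h4 : - LL R r ≤ (R - r) / r := by
        have : Real.log (R / r) ≤ (R - r) / r := by rw [← e]; exact h2
        unfold LL; linarith [h3 ▸ this]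
      have e2 : (r - R) / r = -((R - r) / r) := by ring
      rw [e2]; linarith
    have h6 := mul_self_le_mul_self ha hb
    have heq : (r - R) / r * ((r - R) / r) * r ^ 2 = (r - R) ^ 2 := by
      field_simp
    have h7 := mul_le_mul_of_nonneg_right h6 (sq_nonneg R)
    nlinarith [h7, heq, mul_le_mul_of_nonneg_right h6 (sq_nonneg r)]

/-- key pointwise algebraic identity -/
lemma keyid {rr LArg : ℝ} (hr : rr ≠ 0) (hL : LArg ≠ 0) (a b : ℂ) :
    rr * ‖b‖ ^ 2 - (1 / 4) * (‖a‖ ^ 2 / (rr * LArg ^ 2)) =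
      rr * ‖b - (Complex.ofReal (1 / (2 * rr * LArg))) * a‖ ^ 2 +
        (1 / 2) * ((2 * (a.re * b.re + a.im * b.im)) / LArg - ‖a‖ ^ 2 / (rr * LArg ^ 2)) := by
  simp only [cnormsq, Complex.sub_re, Complex.sub_im, Complex.mul_re, Complex.mul_im,
    Complex.ofReal_re, Complex.ofReal_im]
  field_simp
  ring


lemma tendsto_inv_atBot_zero'' {α : Type*} {l : Filter α} {f : α → ℝ}
    (h : Tendsto f l atBot) : Tendsto (fun x => (f x)⁻¹) l (𝓝 0) := by
  have h2 : Tendsto (fun x => -f x) l atTop := tendsto_neg_atBot_atTop.comp h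
  have h3 := h2.inv_tendsto_atTop
  have h4 := h3.neg
  rw [neg_zero] at h4
  refine h4.congr fun x => ?_
  show -(-f x)⁻¹ = (f x)⁻¹
  rw [inv_neg, neg_neg]

lemma cont_NN (hφc : Continuous φ) : Continuous (NN φ R) :=
  ((hφc.sub continuous_const).norm.pow 2)

lemma NN_R_eq (φ : ℝ → ℂ) (R : ℝ) : NN φ R R = 0 := by simp [NN]

lemma LL_R_eq (R : ℝ) : LL R R = 0 := by
  unfold LL
  rcases eq_or_ne R 0 with h | h
  · simp [h]
  · simp [div_self h]

lemma GG_R_eq (φ : ℝ → ℂ) (R : ℝ) : GG φ R R = 0 := by simp [GG, NN_R_eq]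

lemma tendsto_LL_inv_zero_atTop (hR : 0 < R) :
    Tendsto (fun r => (LL R r)⁻¹) atTop (𝓝 0) := by
  have h1 : Tendsto (fun r : ℝ => r / R) atTop atTop := tendsto_id.atTop_div_const hR
  exact (Real.tendsto_log_atTop.comp h1).inv_tendsto_atTop

lemma tendsto_GG_atTop (hφc : Continuous φ) (hsupp : HasCompactSupport φ) (hR : 0 < R) :
    Tendsto (GG φ R) atTop (𝓝 0) := by
  obtain ⟨T, hT0, hT⟩ := hsupp.exists_pos_le_norm
  have h1 := tendsto_LL_inv_zero_atTop (R := R) hR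
  have h2 : Tendsto (fun r => ‖φ R‖ ^ 2 * (LL R r)⁻¹) atTop (𝓝 (‖φ R‖ ^ 2 * 0)) :=
    tendsto_const_nhds.mul h1
  rw [mul_zero] at h2
  refine Tendsto.congr' ?_ h2
  filter_upwards [eventually_ge_atTop (max T 0)] with x hx
  have hφx : φ x = 0 := by
    apply hT x
    have hx0 : (0:ℝ) ≤ x := le_trans (le_max_right T 0) hx
    rw [Real.norm_eq_abs, abs_of_nonneg hx0]
    exact le_trans (le_max_left T 0) hx
  simp [GG, NN, hφx, div_eq_mul_inv]

lemma tendsto_LL_atBot (hR : 0 < R) : Tendsto (LL R) (𝓝[>] (0:ℝ)) atBot := by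
  apply Real.tendsto_log_nhdsGT_zero.comp
  rw [tendsto_nhdsWithin_iff]
  constructor
  · have h0 : Tendsto (fun r : ℝ => r / R) (𝓝 0) (𝓝 (0 / R)) :=
      (continuous_id.div_const R).tendsto 0
    rw [zero_div] at h0
    exact h0.mono_left nhdsWithin_le_nhds
  · filter_upwards [self_mem_nhdsWithin] with x hx
    exact div_pos hx hR

lemma tendsto_GG_zero (hφc : Continuous φ) (hR : 0 < R) :
    Tendsto (GG φ R) (𝓝[>] (0:ℝ)) (𝓝 0) := by
  have h1 : Tendsto (fun r => (LL R r)⁻¹) (𝓝[>] (0:ℝ)) (𝓝 0) :=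
    tendsto_inv_atBot_zero'' (tendsto_LL_atBot hR)
  have hN : Tendsto (NN φ R) (𝓝[>] (0:ℝ)) (𝓝 (NN φ R 0)) :=
    ((cont_NN hφc).tendsto 0).mono_left nhdsWithin_le_nhds
  have h2 := hN.mul h1
  rw [mul_zero] at h2
  refine Tendsto.congr' ?_ h2
  filter_upwards with x
  simp [GG, div_eq_mul_inv]

lemma tendsto_GG_R (hφ : ContDiff ℝ 1 φ) (hR : 0 < R) :
    Tendsto (GG φ R) (𝓝[≠] R) (𝓝 0) := by
  have hN := hasDerivAt_NN (R := R) hφ R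
  have hD0 : DD φ R R = 0 := by simp [DD]
  rw [hD0] at hN
  have hNs : Tendsto (slope (NN φ R) R) (𝓝[≠] R) (𝓝 0) :=
    hasDerivAt_iff_tendsto_slope.mp hN
  have hLs : Tendsto (slope (LL R) R) (𝓝[≠] R) (𝓝 (1/R)) :=
    hasDerivAt_iff_tendsto_slope.mp (hasDerivAt_LL hR hR)
  have hLsi : Tendsto (fun x => (slope (LL R) R x)⁻¹) (𝓝[≠] R) (𝓝 R) := by
    have h := hLs.inv₀ (by positivity)
    simpa using h
  have hmul := hNs.mul hLsi
  rw [zero_mul] at hmul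
  refine Tendsto.congr' ?_ hmul
  filter_upwards [self_mem_nhdsWithin] with x hx
  have hxR : x ≠ R := hx
  have hsub : x - R ≠ 0 := sub_ne_zero.mpr hxR
  rw [slope_def_field, slope_def_field, NN_R_eq, LL_R_eq, sub_zero, sub_zero]
  by_cases hLx : LL R x = 0
  · simp [GG, hLx]
  · simp only [GG]
    field_simp

def WW (R r : ℝ) : ℝ := -(LL R r)⁻¹

lemma hasDerivAt_WW (hR : 0 < R) (hr : 0 < r) (hne : r ≠ R) :
    HasDerivAt (WW R) (1 / (r * LL R r ^ 2)) r := by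
  have h := ((hasDerivAt_LL hR hr).inv (LL_ne_zero hR hr hne)).neg
  have : WW R = fun x => -(LL R x)⁻¹ := rfl
  rw [this]
  refine h.congr_deriv ?_
  have hL := LL_ne_zero hR hr hne
  have := hr.ne'
  field_simp

lemma contAt_LL (hR : 0 < R) (hr : 0 < r) : ContinuousAt (LL R) r := by
  have : ContinuousAt (fun x : ℝ => x / R) r := (continuous_id.div_const R).continuousAt
  exact ContinuousAt.comp (g := Real.log) (f := fun x : ℝ => x / R)
    (Real.continuousAt_log (div_pos hr hR).ne') this


lemma measurable_LL (R : ℝ) : Measurable (LL R) :=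
  Real.measurable_log.comp (measurable_id.div_const R)

lemma measurable_qq (hφc : Continuous φ) : Measurable (qq φ R) :=
  (cont_NN hφc).measurable.div (measurable_id.mul ((measurable_LL R).pow_const 2))

lemma qq_nonneg (hx : 0 < r) : 0 ≤ qq φ R r :=
  div_nonneg (sq_nonneg _) (mul_nonneg hx.le (sq_nonneg _))

lemma contOn_WW (hR : 0 < R) : ContinuousOn (WW R) (Icc 0 (R/2)) := by
  intro x hx
  rcases eq_or_lt_of_le hx.1 with h0 | h0
  · -- x = 0
    subst h0
    have hW0 : WW R 0 = 0 := by simp [WW, LL]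
    have htd : Tendsto (WW R) (𝓝[>] (0:ℝ)) (𝓝 0) := by
      have h := (tendsto_inv_atBot_zero'' (tendsto_LL_atBot hR)).neg
      rw [neg_zero] at h
      exact h
    have h1 : ContinuousWithinAt (WW R) (Ioi 0) 0 := by
      unfold ContinuousWithinAt
      rw [hW0]; exact htd
    have h2 : ContinuousWithinAt (WW R) (Ici 0) 0 := by
      rw [← Set.Ioi_insert]
      exact continuousWithinAt_insert_self.mpr h1
    exact h2.mono Icc_subset_Ici_self
  · have hne : x ≠ R := by
      intro h; rw [h] at hx; have := hx.2; linarith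
    exact (((contAt_LL hR h0).inv₀ (LL_ne_zero hR h0 hne)).neg).continuousWithinAt

lemma integrable_one_div_left (hR : 0 < R) :
    IntegrableOn (fun r => 1 / (r * LL R r ^ 2)) (Ioo 0 (R/2)) := by
  have h := intervalIntegral.integrableOn_deriv_of_nonneg (contOn_WW hR)
    (fun x hx => hasDerivAt_WW hR hx.1 (by intro h; rw [h] at hx; have := hx.2; linarith))
    (fun x hx => div_nonneg zero_le_one (mul_nonneg hx.1.le (sq_nonneg _)))
  exact h.mono_set Ioo_subset_Ioc_self

lemma integrable_one_div_right (hR : 0 < R) :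
    IntegrableOn (fun r => 1 / (r * LL R r ^ 2)) (Ioi (2*R)) := by
  apply integrableOn_Ioi_deriv_of_nonneg (g := WW R)
  · have hne : (2*R) ≠ R := by intro h; linarith
    exact (((contAt_LL hR (by linarith)).inv₀
      (LL_ne_zero hR (by linarith) hne)).neg).continuousWithinAt
  · exact fun x hx => hasDerivAt_WW hR (by have := hx.out; linarith)
      (by have := hx.out; intro h; rw [h] at this; linarith)
  · exact fun x hx => div_nonneg zero_le_one
      (mul_nonneg (by have := hx.out; linarith) (sq_nonneg _))
  · have h := (tendsto_LL_inv_zero_atTop (R := R) hR).neg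
    rw [neg_zero] at h
    exact h

lemma integrable_qq (hφ : ContDiff ℝ 1 φ) (hsupp : HasCompactSupport φ) (hR : 0 < R) :
    IntegrableOn (qq φ R) (Ioi (0:ℝ)) := by
  have hφc : Continuous φ := hφ.continuous
  have hφd : Differentiable ℝ φ := hφ.differentiable one_ne_zero
  obtain ⟨C, hC⟩ := hsupp.exists_bound_of_continuous hφc
  obtain ⟨M, hM⟩ := (hsupp.deriv).exists_bound_of_continuous (hφ.continuous_deriv le_rfl)
  have hM0 : 0 ≤ M := le_trans (norm_nonneg _) (hM 0)
  have hC0 : 0 ≤ C := le_trans (norm_nonneg _) (hC 0)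
  set K : ℝ := (C + C)^2 with hKdef
  have hK0 : 0 ≤ K := sq_nonneg _
  have hNK : ∀ x, NN φ R x ≤ K := by
    intro x
    have h1 : ‖φ x - φ R‖ ≤ C + C := (norm_sub_le _ _).trans (add_le_add (hC x) (hC R))
    have := pow_le_pow_left₀ (norm_nonneg _) h1 2
    simpa [NN, hKdef] using this
  have hNM : ∀ x : ℝ, NN φ R x ≤ M^2 * (x - R)^2 := by
    intro x
    have h1 : ‖φ x - φ R‖ ≤ M * ‖x - R‖ :=
      Convex.norm_image_sub_le_of_norm_deriv_le (s := Set.univ) (fun y _ => hφd y)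
        (fun y _ => hM y) convex_univ trivial trivial
    have h2 := pow_le_pow_left₀ (norm_nonneg _) h1 2
    have h3 : (M * ‖x - R‖)^2 = M^2 * (x - R)^2 := by
      rw [mul_pow, Real.norm_eq_abs, sq_abs]
    rw [h3] at h2
    exact h2
  have hmeas : AEStronglyMeasurable (qq φ R) (volume.restrict (Ioi (0:ℝ))) :=
    (measurable_qq hφc).aestronglyMeasurable
  -- piece 1 : (0, R/2)
  have hp1 : IntegrableOn (qq φ R) (Ioo 0 (R/2)) := by
    apply Integrable.mono' ((integrable_one_div_left hR).const_mul K)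
      ((measurable_qq hφc).aestronglyMeasurable)
    rw [ae_restrict_iff' measurableSet_Ioo]
    refine Filter.Eventually.of_forall fun x hx => ?_
    have hx0 : 0 < x := hx.1
    have hne : x ≠ R := by intro h; rw [h] at hx; have := hx.2; linarith
    have hd : 0 < x * LL R x ^ 2 :=
      mul_pos hx0 (pow_two_pos_of_ne_zero (LL_ne_zero hR hx0 hne))
    rw [Real.norm_eq_abs, abs_of_nonneg (qq_nonneg hx0)]
    unfold qq
    rw [mul_one_div, div_le_div_iff₀ hd hd]
    have := hNK x
    nlinarith [hd]
  -- piece 2 : [R/2, 2R]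
  have hp2 : IntegrableOn (qq φ R) (Icc (R/2) (2*R)) := by
    apply Measure.integrableOn_of_bounded (M := 8*M^2*R)
      (measure_Icc_lt_top).ne ((measurable_qq hφc).aestronglyMeasurable)
    rw [ae_restrict_iff' measurableSet_Icc]
    refine Filter.Eventually.of_forall fun x hx => ?_
    have hx0 : 0 < x := lt_of_lt_of_le (by linarith) hx.1
    rw [Real.norm_eq_abs, abs_of_nonneg (qq_nonneg hx0)]
    by_cases hne : x = R
    · subst hne
      unfold qq
      rw [NN_R_eq, zero_div]
      positivity
    · have hL2 : 0 < LL R x ^ 2 := pow_two_pos_of_ne_zero (LL_ne_zero hR hx0 hne)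
      have hll := llb (r := x) hR hx0
      have hmaxnn : (0:ℝ) ≤ max x R := le_trans hR.le (le_max_right x R)
      have hmax : max x R ≤ 2*R := max_le (by linarith [hx.2]) (by linarith)
      have hmax2 : (max x R)^2 ≤ (2*R)^2 := pow_le_pow_left₀ hmaxnn hmax 2
      have hNMx := hNM x
      unfold qq
      rw [div_le_iff₀ (mul_pos hx0 hL2)]
      have e1 : M^2 * (x - R)^2 ≤ M^2 * (LL R x ^2 * (max x R)^2) :=
        mul_le_mul_of_nonneg_left hll (sq_nonneg M)
      have e2 : M^2 * (LL R x ^2 * (max x R)^2) ≤ M^2 * (LL R x^2 * (2*R)^2) := by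
        apply mul_le_mul_of_nonneg_left _ (sq_nonneg M)
        exact mul_le_mul_of_nonneg_left hmax2 (sq_nonneg _)
      have e3 : (0:ℝ) ≤ 4*M^2*R*(LL R x^2) := by positivity
      nlinarith [hx.1, e3, mul_le_mul_of_nonneg_left (show R/2 ≤ x from hx.1)
        (mul_nonneg (mul_nonneg (by positivity : (0:ℝ) ≤ 8*M^2) hR.le) (sq_nonneg (LL R x)))]
  -- piece 3 : (2R, ∞)
  have hp3 : IntegrableOn (qq φ R) (Ioi (2*R)) := by
    apply Integrable.mono' ((integrable_one_div_right hR).const_mul K)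
      ((measurable_qq hφc).aestronglyMeasurable)
    rw [ae_restrict_iff' measurableSet_Ioi]
    refine Filter.Eventually.of_forall fun x hx => ?_
    have hx0 : 0 < x := lt_trans (by linarith) hx.out
    have hne : x ≠ R := by have := hx.out; intro h; rw [h] at this; linarith
    have hd : 0 < x * LL R x ^ 2 :=
      mul_pos hx0 (pow_two_pos_of_ne_zero (LL_ne_zero hR hx0 hne))
    rw [Real.norm_eq_abs, abs_of_nonneg (qq_nonneg hx0)]
    unfold qq
    rw [mul_one_div, div_le_div_iff₀ hd hd]
    have := hNK x
    nlinarith [hd]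
  have hsub : Ioi (0:ℝ) ⊆ (Ioo 0 (R/2) ∪ Icc (R/2) (2*R)) ∪ Ioi (2*R) := by
    intro x hx
    rcases lt_or_ge x (R/2) with h | h
    · exact Or.inl (Or.inl ⟨hx, h⟩)
    · rcases le_or_gt x (2*R) with h2 | h2
      · exact Or.inl (Or.inr ⟨h, h2⟩)
      · exact Or.inr h2
  exact ((hp1.union hp2).union hp3).mono_set hsub

end OneDimLogHardyAux

open OneDimLogHardyAux Set

/-- one-dimensional Hardy inequality with logarithmic weight. -/
theorem one_dim_log_hardy (φ : ℝ → ℂ) (hφ : ContDiff ℝ 1 φ) (hsupp : HasCompactSupport φ)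
    (R : ℝ) (hR : 0 < R) :
    (∫ r in Set.Ioi (0 : ℝ), r * ‖deriv φ r‖ ^ 2) ≥
      (1 / 4) * ∫ r in Set.Ioi (0 : ℝ), ‖φ r - φ R‖ ^ 2 / (r * (Real.log (r / R)) ^ 2) := by
  have hφc : Continuous φ := hφ.continuous
  have hφd : Differentiable ℝ φ := hφ.differentiable one_ne_zero
  have hψ'c : Continuous (deriv φ) := hφ.continuous_deriv le_rfl
  have hψ's : HasCompactSupport (deriv φ) := hsupp.deriv
  -- LHS integrand integrable
  have hIlhs : IntegrableOn (fun r => r * ‖deriv φ r‖ ^ 2) (Set.Ioi (0:ℝ)) := by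
    have hcont : Continuous (fun r : ℝ => r * ‖deriv φ r‖ ^ 2) :=
      continuous_id.mul (hψ'c.norm.pow 2)
    have h1 : HasCompactSupport (fun r : ℝ => ‖deriv φ r‖ ^ 2) :=
      hψ's.comp_left (g := fun z : ℂ => ‖z‖ ^ 2) (by simp)
    have h2 : HasCompactSupport (fun r : ℝ => r * ‖deriv φ r‖ ^ 2) := h1.mul_left
    exact (hcont.integrable_of_hasCompactSupport h2).integrableOn
  have hIq : IntegrableOn (qq φ R) (Set.Ioi 0) := integrable_qq hφ hsupp hR
  -- integrability of D/L
  have hDc : Continuous (DD φ R) := by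
    apply Continuous.mul continuous_const
    exact ((Complex.continuous_re.comp (hφc.sub continuous_const)).mul
        (Complex.continuous_re.comp hψ'c)).add
      ((Complex.continuous_im.comp (hφc.sub continuous_const)).mul
        (Complex.continuous_im.comp hψ'c))
  have hhm : Measurable (fun r => DD φ R r / LL R r) :=
    hDc.measurable.div (measurable_LL R)
  have hbound : ∀ x ∈ Set.Ioi (0:ℝ), ‖DD φ R x / LL R x‖ ≤ qq φ R x + x * ‖deriv φ x‖ ^ 2 := by
    intro x hx
    have hx0 : (0:ℝ) < x := hx
    by_cases hne : x = R
    · subst hne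
      rw [LL_R_eq, div_zero, norm_zero]
      exact add_nonneg (qq_nonneg hx0) (mul_nonneg hx0.le (sq_nonneg _))
    · have hLne := LL_ne_zero hR hx0 hne
      have hl : 0 < |LL R x| := abs_pos.mpr hLne
      have hu0 : 0 ≤ ‖φ x - φ R‖ := norm_nonneg _
      have hv0 : 0 ≤ ‖deriv φ x‖ := norm_nonneg _
      have hDb : |DD φ R x| ≤ 2 * (‖φ x - φ R‖ * ‖deriv φ x‖) := by
        have h1 : (starRingEnd ℂ (φ x - φ R) * deriv φ x).re
            = (φ x - φ R).re * (deriv φ x).re + (φ x - φ R).im * (deriv φ x).im := by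
          simp [Complex.mul_re, Complex.conj_re, Complex.conj_im]
          ring
        have h2 : |(starRingEnd ℂ (φ x - φ R) * deriv φ x).re| ≤ ‖φ x - φ R‖ * ‖deriv φ x‖ := by
          refine (Complex.abs_re_le_norm _).trans ?_
          rw [norm_mul, Complex.norm_conj]
        have h3 : |DD φ R x| = 2 * |(starRingEnd ℂ (φ x - φ R) * deriv φ x).re| := by
          unfold DD
          rw [← h1, abs_mul]
          norm_num
        rw [h3]
        linarith
      have hq : qq φ R x = ‖φ x - φ R‖ ^ 2 / (x * |LL R x| ^ 2) := by
        unfold qq NN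
        rw [sq_abs]
      have key : 2 * (‖φ x - φ R‖ * ‖deriv φ x‖) / |LL R x|
          ≤ ‖φ x - φ R‖ ^ 2 / (x * |LL R x| ^ 2) + x * ‖deriv φ x‖ ^ 2 := by
        set u := ‖φ x - φ R‖
        set v := ‖deriv φ x‖
        set l := |LL R x|
        have hpos : 0 < x * l ^ 2 := mul_pos hx0 (pow_pos hl 2)
        have h3 : 2 * (u * v) / l = (2 * (u * v) * x * l) / (x * l ^ 2) := by
          field_simp
        have h4 : u ^ 2 / (x * l ^ 2) + x * v ^ 2
            = (u ^ 2 + x ^ 2 * v ^ 2 * l ^ 2) / (x * l ^ 2) := by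
          field_simp
        rw [h3, h4, div_le_div_iff₀ hpos hpos]
        nlinarith [sq_nonneg (u - x * v * l), hpos, mul_pos hx0 hl]
      calc ‖DD φ R x / LL R x‖ = |DD φ R x| / |LL R x| := by
            rw [Real.norm_eq_abs, abs_div]
        _ ≤ 2 * (‖φ x - φ R‖ * ‖deriv φ x‖) / |LL R x| := by gcongr
        _ ≤ ‖φ x - φ R‖ ^ 2 / (x * |LL R x| ^ 2) + x * ‖deriv φ x‖ ^ 2 := key
        _ = qq φ R x + x * ‖deriv φ x‖ ^ 2 := by rw [hq]
  have hIh : IntegrableOn (fun r => DD φ R r / LL R r) (Set.Ioi 0) := by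
    apply Integrable.mono' (hIq.add hIlhs) hhm.aestronglyMeasurable
    rw [ae_restrict_iff' measurableSet_Ioi]
    exact Filter.Eventually.of_forall hbound
  have hIg : IntegrableOn (gg φ R) (Set.Ioi 0) := hIh.sub hIq
  -- derivative of GG
  have hGder : ∀ x ∈ Set.Ioi (0:ℝ), x ≠ R → HasDerivAt (GG φ R) (gg φ R x) x :=
    fun x hx hne => hasDerivAt_GG hφ hR hx hne
  -- integral over Ioi R is 0
  have hIoiR : (∫ x in Set.Ioi R, gg φ R x) = 0 := by
    have hcont : ContinuousWithinAt (GG φ R) (Set.Ici R) R := by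
      rw [← Set.Ioi_insert]
      apply continuousWithinAt_insert_self.mpr
      unfold ContinuousWithinAt
      rw [GG_R_eq]
      exact (tendsto_GG_R hφ hR).mono_left
        (nhdsWithin_mono R (fun x hx => Set.mem_compl_singleton_iff.mpr (ne_of_gt hx)))
    have h := integral_Ioi_of_hasDerivAt_of_tendsto hcont
      (fun x hx => hGder x (lt_trans hR hx) (ne_of_gt hx))
      (hIg.mono_set (Set.Ioi_subset_Ioi hR.le))
      (tendsto_GG_atTop hφc hsupp hR)
    rw [h, GG_R_eq, sub_zero]
  -- integral over Ioo 0 R is 0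
  have hIooR : (∫ x in Set.Ioo (0:ℝ) R, gg φ R x) = 0 := by
    have hint : IntervalIntegrable (gg φ R) volume 0 R := by
      rw [intervalIntegrable_iff_integrableOn_Ioc_of_le hR.le]
      exact hIg.mono_set Set.Ioc_subset_Ioi_self
    have h := intervalIntegral.integral_eq_sub_of_hasDerivAt_of_tendsto hR
      (fun x hx => hGder x hx.1 (ne_of_lt hx.2)) hint
      (tendsto_GG_zero hφc hR)
      ((tendsto_GG_R hφ hR).mono_left
        (nhdsWithin_mono R (fun x hx => Set.mem_compl_singleton_iff.mpr (ne_of_lt hx))))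
    rw [intervalIntegral.integral_of_le hR.le, integral_Ioc_eq_integral_Ioo] at h
    rw [h, sub_zero]
  -- total integral of gg is 0
  have hggzero : (∫ x in Set.Ioi (0:ℝ), gg φ R x) = 0 := by
    rw [← Set.Ioc_union_Ioi_eq_Ioi hR.le,
      setIntegral_union (Set.Ioc_disjoint_Ioi le_rfl) measurableSet_Ioi
        (hIg.mono_set Set.Ioc_subset_Ioi_self) (hIg.mono_set (Set.Ioi_subset_Ioi hR.le)),
      integral_Ioc_eq_integral_Ioo, hIooR, hIoiR, add_zero]
  -- pointwise identity a.e.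
  set P : ℝ → ℝ :=
    fun r => r * ‖deriv φ r - (Complex.ofReal (1/(2*r*LL R r))) * (φ r - φ R)‖ ^ 2 with hPdef
  have hae : ∀ᵐ r ∂(volume.restrict (Set.Ioi (0:ℝ))),
      r * ‖deriv φ r‖ ^ 2 = P r + (1/2) * gg φ R r + (1/4) * qq φ R r := by
    have hRne : ∀ᵐ r ∂(volume.restrict (Set.Ioi (0:ℝ))), r ≠ R := by
      apply ae_restrict_of_ae
      refine (MeasureTheory.ae_iff).mpr ?_
      have hset : {a : ℝ | ¬ a ≠ R} = {R} := by ext a; simp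
      rw [hset]
      exact Real.volume_singleton
    filter_upwards [ae_restrict_mem measurableSet_Ioi, hRne] with r hr hne
    have hr0 : (0:ℝ) < r := hr
    have hL := LL_ne_zero hR hr0 hne
    have h := keyid (rr := r) (LArg := LL R r) hr0.ne' hL (φ r - φ R) (deriv φ r)
    have h2 : r * ‖deriv φ r‖ ^ 2 - (1/4) * qq φ R r = P r + (1/2) * gg φ R r := by
      rw [hPdef]
      unfold gg qq DD NN
      convert h using 2
    linarith [h2]
  -- integrability of P
  have hIP : IntegrableOn P (Set.Ioi 0) := by
    have hcomb : IntegrableOn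
        (fun r => r * ‖deriv φ r‖ ^ 2 - (1/2) * gg φ R r - (1/4) * qq φ R r)
        (Set.Ioi 0) := (hIlhs.sub (hIg.const_mul (1/2))).sub (hIq.const_mul (1/4))
    apply hcomb.congr
    filter_upwards [hae] with r hr
    linarith [hr]
  have hPnn : 0 ≤ ∫ r in Set.Ioi (0:ℝ), P r :=
    setIntegral_nonneg measurableSet_Ioi (fun r hr => mul_nonneg (le_of_lt hr) (sq_nonneg _))
  have hsplit : (∫ r in Set.Ioi (0:ℝ), r * ‖deriv φ r‖ ^ 2)
      = (∫ r in Set.Ioi (0:ℝ), P r) + (1/2) * (∫ r in Set.Ioi (0:ℝ), gg φ R r)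
        + (1/4) * (∫ r in Set.Ioi (0:ℝ), qq φ R r) := by
    rw [integral_congr_ae hae]
    have i1 : Integrable (fun a => P a + 1/2 * gg φ R a) (volume.restrict (Set.Ioi (0:ℝ))) :=
      hIP.add (hIg.const_mul (1/2))
    have i2 : Integrable (fun a => 1/4 * qq φ R a) (volume.restrict (Set.Ioi (0:ℝ))) :=
      hIq.const_mul (1/4)
    have i3 : Integrable (fun a => 1/2 * gg φ R a) (volume.restrict (Set.Ioi (0:ℝ))) :=
      hIg.const_mul (1/2)
    rw [integral_add i1 i2, integral_add hIP i3, integral_const_mul, integral_const_mul]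
  have hfinal : (∫ r in Set.Ioi (0:ℝ), ‖φ r - φ R‖ ^ 2 / (r * (Real.log (r / R)) ^ 2))
      = ∫ r in Set.Ioi (0:ℝ), qq φ R r := rfl
  rw [ge_iff_le, hfinal, hsplit, hggzero]
  linarith [hPnn]
end
end

section
/- Let ν, μ, λ ∈ ℝ satisfy |ν| + √(μ² + λ²) ≤ 1. If (k + λ)² + μ² − ν² = 0 for some integer k ≠ 0, then μ = 0. -/
open MeasureTheory Real Filter

noncomputable section

/-- under the criticality condition, if (k+λ)² + μ² − ν² = 0 for some
nonzero integer k, then μ = 0. -/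
theorem delta_zero_imp_mu_zero (ν μ lam : ℝ) (h : |ν| + Real.sqrt (μ ^ 2 + lam ^ 2) ≤ 1)
    (k : ℤ) (hk : k ≠ 0) (h0 : ((k : ℝ) + lam) ^ 2 + μ ^ 2 - ν ^ 2 = 0) :
    μ = 0 := by
  set s := Real.sqrt (μ ^ 2 + lam ^ 2) with hs
  have hs2 : s ^ 2 = μ ^ 2 + lam ^ 2 := Real.sq_sqrt (by positivity)
  have hsl : |lam| ≤ s := by
    rw [← Real.sqrt_sq_eq_abs]
    exact Real.sqrt_le_sqrt (by nlinarith [sq_nonneg μ])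
  have hk1 : (1 : ℝ) ≤ |(k : ℝ)| := by
    rw [← Int.cast_abs]; exact_mod_cast Int.one_le_abs hk
  have hkl : |(k : ℝ)| - |lam| ≤ |(k : ℝ) + lam| := by
    have := abs_add_le ((k : ℝ) + lam) (-lam)
    simp at this; linarith [this]
  have hνn : |ν| ≤ 1 - s := by linarith
  have hν2 : ν ^ 2 ≤ (1 - s) ^ 2 := by
    nlinarith [abs_nonneg ν, sq_abs ν]
  have hkl2 : (1 - |lam|) ^ 2 ≤ ((k : ℝ) + lam) ^ 2 := by
    nlinarith [sq_abs ((k : ℝ) + lam), abs_nonneg ((k : ℝ) + lam), abs_nonneg lam,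
      abs_nonneg ν]
  have hsle : s ≤ |lam| := by nlinarith [sq_abs lam]
  have : s = |lam| := le_antisymm hsle hsl
  nlinarith [sq_abs lam]
end
end

section
/- Let 0 < γ < 1/2, let D be a real 2×2 matrix, let A = (A⁺, A⁻), Ã = (Ã⁺, Ã⁻) ∈ ℂ², and let f = (f⁺,f⁻), g = (g⁺,g⁻) : (0,∞) → ℂ² satisfy lim_{r→0⁺} r^{−1/2} | f(r) − D·(A⁺ r^γ, A⁻ r^{−γ}) | = 0 and lim_{r→0⁺} r^{−1/2} | g(r) − D·(Ã⁺ r^γ, Ã⁻ r^{−γ}) | = 0. Then lim_{r→0⁺} [ f⁺(r) conj(g⁻(r)) − f⁻(r) conj(g⁺(r)) ] = det(D) · ( A⁺ conj(Ã⁻) − A⁻ conj(Ã⁺) ). -/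
open MeasureTheory Real Filter

noncomputable section

private lemma mulVec_fin2_zero (M : Matrix (Fin 2) (Fin 2) ℝ) (x y : ℂ) :
    (M.map (fun t => (t : ℂ))).mulVec ![x, y] 0 = (M 0 0 : ℂ) * x + (M 0 1 : ℂ) * y := by
  simp [Matrix.mulVec, dotProduct, Fin.sum_univ_two]

private lemma mulVec_fin2_one (M : Matrix (Fin 2) (Fin 2) ℝ) (x y : ℂ) :
    (M.map (fun t => (t : ℂ))).mulVec ![x, y] 1 = (M 1 0 : ℂ) * x + (M 1 1 : ℂ) * y := by
  simp [Matrix.mulVec, dotProduct, Fin.sum_univ_two]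

private lemma model_bound (c d γ : ℝ) (a b : ℂ) (r : ℝ) (hr : 0 < r) (hr1 : r ≤ 1)
    (hγ : 0 < γ) :
    ‖((c : ℂ) * (a * ((r ^ γ : ℝ) : ℂ)) + (d : ℂ) * (b * ((r ^ (-γ) : ℝ) : ℂ)))‖
      ≤ (|c| * ‖a‖ + |d| * ‖b‖) * r ^ (-γ) := by
  have h1 : r ^ γ ≤ r ^ (-γ) := Real.rpow_le_rpow_of_exponent_ge hr hr1 (by linarith)
  have h2 : (0:ℝ) ≤ r ^ γ := Real.rpow_nonneg hr.le _
  have h3 : (0:ℝ) ≤ r ^ (-γ) := Real.rpow_nonneg hr.le _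
  calc ‖((c : ℂ) * (a * ((r ^ γ : ℝ) : ℂ)) + (d : ℂ) * (b * ((r ^ (-γ) : ℝ) : ℂ)))‖
      ≤ ‖((c : ℂ) * (a * ((r ^ γ : ℝ) : ℂ)))‖
        + ‖((d : ℂ) * (b * ((r ^ (-γ) : ℝ) : ℂ)))‖ := norm_add_le _ _
    _ = |c| * ‖a‖ * (r ^ γ) + |d| * ‖b‖ * (r ^ (-γ)) := by
        simp only [norm_mul, Complex.norm_real, Real.norm_eq_abs, abs_of_nonneg h2, abs_of_nonneg h3]
        ring
    _ ≤ |c| * ‖a‖ * (r ^ (-γ)) + |d| * ‖b‖ * (r ^ (-γ)) := by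
        have hcnn : 0 ≤ |c| * ‖a‖ := mul_nonneg (abs_nonneg _) (norm_nonneg _)
        have hdnn : 0 ≤ |d| * ‖b‖ := mul_nonneg (abs_nonneg _) (norm_nonneg _)
        nlinarith
    _ = (|c| * ‖a‖ + |d| * ‖b‖) * r ^ (-γ) := by ring

/-- boundary limit of the Wronskian-type expression in the subcritical
case 0 < δ < 1/4. -/
theorem wronskian_limit_subcritical (γ : ℝ) (hγ0 : 0 < γ) (hγ : γ < 1 / 2)
    (D : Matrix (Fin 2) (Fin 2) ℝ) (Ap Am Bp Bm : ℂ) (fp fm gp gm : ℝ → ℂ)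
    (hf : Tendsto (fun r : ℝ =>
        Real.sqrt
          (‖(fp r -
              (D.map (fun t => (t : ℂ))).mulVec
                ![Ap * ((r ^ γ : ℝ) : ℂ), Am * ((r ^ (-γ) : ℝ) : ℂ)] 0)‖ ^ 2 +
            ‖(fm r -
              (D.map (fun t => (t : ℂ))).mulVec
                ![Ap * ((r ^ γ : ℝ) : ℂ), Am * ((r ^ (-γ) : ℝ) : ℂ)] 1)‖ ^ 2) *
          r ^ (-(1 / 2 : ℝ))) (nhdsWithin 0 (Set.Ioi 0)) (nhds 0))
    (hg : Tendsto (fun r : ℝ =>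
        Real.sqrt
          (‖(gp r -
              (D.map (fun t => (t : ℂ))).mulVec
                ![Bp * ((r ^ γ : ℝ) : ℂ), Bm * ((r ^ (-γ) : ℝ) : ℂ)] 0)‖ ^ 2 +
            ‖(gm r -
              (D.map (fun t => (t : ℂ))).mulVec
                ![Bp * ((r ^ γ : ℝ) : ℂ), Bm * ((r ^ (-γ) : ℝ) : ℂ)] 1)‖ ^ 2) *
          r ^ (-(1 / 2 : ℝ))) (nhdsWithin 0 (Set.Ioi 0)) (nhds 0)) :
    Tendsto (fun r : ℝ => fp r * (starRingEnd ℂ) (gm r) - fm r * (starRingEnd ℂ) (gp r))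
      (nhdsWithin 0 (Set.Ioi 0))
      (nhds (((D.det : ℝ) : ℂ) * (Ap * (starRingEnd ℂ) Bm - Am * (starRingEnd ℂ) Bp))) := by
  set l := nhdsWithin (0:ℝ) (Set.Ioi 0) with hl
  -- model functions
  set u0 : ℝ → ℂ := fun r => (D 0 0 : ℂ) * (Ap * ((r ^ γ : ℝ) : ℂ)) + (D 0 1 : ℂ) * (Am * ((r ^ (-γ) : ℝ) : ℂ)) with hu0
  set u1 : ℝ → ℂ := fun r => (D 1 0 : ℂ) * (Ap * ((r ^ γ : ℝ) : ℂ)) + (D 1 1 : ℂ) * (Am * ((r ^ (-γ) : ℝ) : ℂ)) with hu1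
  set v0 : ℝ → ℂ := fun r => (D 0 0 : ℂ) * (Bp * ((r ^ γ : ℝ) : ℂ)) + (D 0 1 : ℂ) * (Bm * ((r ^ (-γ) : ℝ) : ℂ)) with hv0
  set v1 : ℝ → ℂ := fun r => (D 1 0 : ℂ) * (Bp * ((r ^ γ : ℝ) : ℂ)) + (D 1 1 : ℂ) * (Bm * ((r ^ (-γ) : ℝ) : ℂ)) with hv1
  set Ef : ℝ → ℝ := fun r =>
    Real.sqrt (‖(fp r - u0 r)‖ ^ 2 + ‖(fm r - u1 r)‖ ^ 2) * r ^ (-(1/2 : ℝ)) with hEf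
  set Eg : ℝ → ℝ := fun r =>
    Real.sqrt (‖(gp r - v0 r)‖ ^ 2 + ‖(gm r - v1 r)‖ ^ 2) * r ^ (-(1/2 : ℝ)) with hEg
  have hf' : Tendsto Ef l (nhds 0) := by
    refine hf.congr fun r => ?_
    simp only [hEf, mulVec_fin2_zero, mulVec_fin2_one, hu0, hu1]
  have hg' : Tendsto Eg l (nhds 0) := by
    refine hg.congr fun r => ?_
    simp only [hEg, mulVec_fin2_zero, mulVec_fin2_one, hv0, hv1]
  -- pointwise error bounds
  have habs : ∀ r : ℝ, 0 < r → ∀ x y : ℂ,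
      ‖x‖ ≤ Real.sqrt (‖x‖ ^ 2 + ‖y‖ ^ 2) := by
    intro r _ x y
    have := Real.sqrt_le_sqrt (le_add_of_nonneg_right (sq_nonneg (‖y‖)) :
      ‖x‖ ^ 2 ≤ ‖x‖ ^ 2 + ‖y‖ ^ 2)
    rwa [Real.sqrt_sq (norm_nonneg _)] at this
  have hsq : ∀ r : ℝ, 0 < r → ∀ s : ℝ, 0 ≤ s → s = (s * r ^ (-(1/2:ℝ))) * r ^ ((1/2:ℝ)) := by
    intro r hr s _
    rw [mul_assoc, ← Real.rpow_add hr]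
    norm_num
  have hfa : ∀ r : ℝ, 0 < r → ‖(fp r - u0 r)‖ ≤ Ef r * r ^ ((1/2:ℝ)) := by
    intro r hr
    have h1 := habs r hr (fp r - u0 r) (fm r - u1 r)
    have h2 := hsq r hr _ (Real.sqrt_nonneg (‖(fp r - u0 r)‖ ^ 2 + ‖(fm r - u1 r)‖ ^ 2))
    calc ‖(fp r - u0 r)‖ ≤ _ := h1
      _ = Ef r * r ^ ((1/2:ℝ)) := h2
  have hfb : ∀ r : ℝ, 0 < r → ‖(fm r - u1 r)‖ ≤ Ef r * r ^ ((1/2:ℝ)) := by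
    intro r hr
    have h1 := habs r hr (fm r - u1 r) (fp r - u0 r)
    have h2 := hsq r hr _ (Real.sqrt_nonneg (‖(fp r - u0 r)‖ ^ 2 + ‖(fm r - u1 r)‖ ^ 2))
    calc ‖(fm r - u1 r)‖
        ≤ Real.sqrt (‖(fm r - u1 r)‖ ^ 2 + ‖(fp r - u0 r)‖ ^ 2) := h1
      _ = Real.sqrt (‖(fp r - u0 r)‖ ^ 2 + ‖(fm r - u1 r)‖ ^ 2) := by rw [add_comm]
      _ = Ef r * r ^ ((1/2:ℝ)) := h2
  have hga : ∀ r : ℝ, 0 < r → ‖(gp r - v0 r)‖ ≤ Eg r * r ^ ((1/2:ℝ)) := by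
    intro r hr
    have h1 := habs r hr (gp r - v0 r) (gm r - v1 r)
    have h2 := hsq r hr _ (Real.sqrt_nonneg (‖(gp r - v0 r)‖ ^ 2 + ‖(gm r - v1 r)‖ ^ 2))
    calc ‖(gp r - v0 r)‖ ≤ _ := h1
      _ = Eg r * r ^ ((1/2:ℝ)) := h2
  have hgb : ∀ r : ℝ, 0 < r → ‖(gm r - v1 r)‖ ≤ Eg r * r ^ ((1/2:ℝ)) := by
    intro r hr
    have h1 := habs r hr (gm r - v1 r) (gp r - v0 r)
    have h2 := hsq r hr _ (Real.sqrt_nonneg (‖(gp r - v0 r)‖ ^ 2 + ‖(gm r - v1 r)‖ ^ 2))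
    calc ‖(gm r - v1 r)‖
        ≤ Real.sqrt (‖(gm r - v1 r)‖ ^ 2 + ‖(gp r - v0 r)‖ ^ 2) := h1
      _ = Real.sqrt (‖(gp r - v0 r)‖ ^ 2 + ‖(gm r - v1 r)‖ ^ 2) := by rw [add_comm]
      _ = Eg r * r ^ ((1/2:ℝ)) := h2
  -- constants bounding the model functions
  set K0 : ℝ := |D 0 0| * ‖Ap‖ + |D 0 1| * ‖Am‖ with hK0
  set K1 : ℝ := |D 1 0| * ‖Ap‖ + |D 1 1| * ‖Am‖ with hK1
  set L0 : ℝ := |D 0 0| * ‖Bp‖ + |D 0 1| * ‖Bm‖ with hL0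
  set L1 : ℝ := |D 1 0| * ‖Bp‖ + |D 1 1| * ‖Bm‖ with hL1
  -- the constant Wronskian identity for the model
  set W : ℂ := ((D.det : ℝ) : ℂ) * (Ap * (starRingEnd ℂ) Bm - Am * (starRingEnd ℂ) Bp) with hW
  have hmodel : ∀ r : ℝ, 0 < r →
      u0 r * (starRingEnd ℂ) (v1 r) - u1 r * (starRingEnd ℂ) (v0 r) = W := by
    intro r hr
    have hXY : ((r ^ γ : ℝ) : ℂ) * ((r ^ (-γ) : ℝ) : ℂ) = 1 := by
      rw [← Complex.ofReal_mul, ← Real.rpow_add hr]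
      norm_num
    simp only [hu0, hu1, hv0, hv1, hW, map_add, map_mul, Complex.conj_ofReal,
      Matrix.det_fin_two]
    push_cast
    linear_combination (((D 0 0 : ℂ) * (D 1 1 : ℂ) - (D 0 1 : ℂ) * (D 1 0 : ℂ)) *
      (Ap * (starRingEnd ℂ) Bm - Am * (starRingEnd ℂ) Bp)) * hXY
  -- remainder
  set R : ℝ → ℂ := fun r =>
    u0 r * (starRingEnd ℂ) (gm r - v1 r) + (fp r - u0 r) * (starRingEnd ℂ) (v1 r)
      + (fp r - u0 r) * (starRingEnd ℂ) (gm r - v1 r)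
      - u1 r * (starRingEnd ℂ) (gp r - v0 r) - (fm r - u1 r) * (starRingEnd ℂ) (v0 r)
      - (fm r - u1 r) * (starRingEnd ℂ) (gp r - v0 r) with hR
  have hdecomp : ∀ r : ℝ, 0 < r →
      fp r * (starRingEnd ℂ) (gm r) - fm r * (starRingEnd ℂ) (gp r) = W + R r := by
    intro r hr
    have h1 := hmodel r hr
    have e1 : (starRingEnd ℂ) (gm r) = (starRingEnd ℂ) (v1 r) + (starRingEnd ℂ) (gm r - v1 r) := by
      rw [← map_add]; ring_nf
    have e2 : (starRingEnd ℂ) (gp r) = (starRingEnd ℂ) (v0 r) + (starRingEnd ℂ) (gp r - v0 r) := by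
      rw [← map_add]; ring_nf
    rw [e1, e2, ← h1]
    simp only [hR]
    ring
  -- the remainder tends to 0
  have hK0nn : 0 ≤ K0 := add_nonneg (mul_nonneg (abs_nonneg _) (norm_nonneg _))
    (mul_nonneg (abs_nonneg _) (norm_nonneg _))
  have hK1nn : 0 ≤ K1 := add_nonneg (mul_nonneg (abs_nonneg _) (norm_nonneg _))
    (mul_nonneg (abs_nonneg _) (norm_nonneg _))
  have hL0nn : 0 ≤ L0 := add_nonneg (mul_nonneg (abs_nonneg _) (norm_nonneg _))
    (mul_nonneg (abs_nonneg _) (norm_nonneg _))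
  have hL1nn : 0 ≤ L1 := add_nonneg (mul_nonneg (abs_nonneg _) (norm_nonneg _))
    (mul_nonneg (abs_nonneg _) (norm_nonneg _))
  have hRlim : Tendsto R l (nhds 0) := by
    have hmemIoo : Set.Ioo (0:ℝ) 1 ∈ l := Ioo_mem_nhdsGT_of_mem (by norm_num : (0:ℝ) ∈ Set.Ico 0 1)
    set Φ : ℝ → ℝ := fun r =>
      K0 * r ^ (-γ) * (Eg r * r ^ ((1/2:ℝ))) + Ef r * r ^ ((1/2:ℝ)) * (L1 * r ^ (-γ))
        + Ef r * r ^ ((1/2:ℝ)) * (Eg r * r ^ ((1/2:ℝ)))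
        + K1 * r ^ (-γ) * (Eg r * r ^ ((1/2:ℝ))) + Ef r * r ^ ((1/2:ℝ)) * (L0 * r ^ (-γ))
        + Ef r * r ^ ((1/2:ℝ)) * (Eg r * r ^ ((1/2:ℝ))) with hPhi
    have hbound : ∀ᶠ r in l, ‖R r‖ ≤ Φ r := by
      filter_upwards [hmemIoo] with r hrm
      obtain ⟨hr, hr1⟩ := hrm
      have hu0b : ‖(u0 r)‖ ≤ K0 * r ^ (-γ) := model_bound _ _ _ _ _ _ hr hr1.le hγ0
      have hu1b : ‖(u1 r)‖ ≤ K1 * r ^ (-γ) := model_bound _ _ _ _ _ _ hr hr1.le hγ0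
      have hv0b : ‖(v0 r)‖ ≤ L0 * r ^ (-γ) := model_bound _ _ _ _ _ _ hr hr1.le hγ0
      have hv1b : ‖(v1 r)‖ ≤ L1 * r ^ (-γ) := model_bound _ _ _ _ _ _ hr hr1.le hγ0
      have hfa' := hfa r hr
      have hfb' := hfb r hr
      have hga' := hga r hr
      have hgb' := hgb r hr
      have hEfnn : 0 ≤ Ef r * r ^ ((1/2:ℝ)) := le_trans (norm_nonneg _) hfa'
      have hEgnn : 0 ≤ Eg r * r ^ ((1/2:ℝ)) := le_trans (norm_nonneg _) hga'
      have hrg : (0:ℝ) ≤ r ^ (-γ) := Real.rpow_nonneg hr.le _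
      have t1 : ‖(u0 r * (starRingEnd ℂ) (gm r - v1 r))‖ ≤ K0 * r ^ (-γ) * (Eg r * r ^ ((1/2:ℝ))) := by
        rw [norm_mul, Complex.norm_conj]
        exact mul_le_mul hu0b hgb' (norm_nonneg _) (mul_nonneg hK0nn hrg)
      have t2 : ‖((fp r - u0 r) * (starRingEnd ℂ) (v1 r))‖ ≤ Ef r * r ^ ((1/2:ℝ)) * (L1 * r ^ (-γ)) := by
        rw [norm_mul, Complex.norm_conj]
        exact mul_le_mul hfa' hv1b (norm_nonneg _) hEfnn
      have t3 : ‖((fp r - u0 r) * (starRingEnd ℂ) (gm r - v1 r))‖ ≤ Ef r * r ^ ((1/2:ℝ)) * (Eg r * r ^ ((1/2:ℝ))) := by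
        rw [norm_mul, Complex.norm_conj]
        exact mul_le_mul hfa' hgb' (norm_nonneg _) hEfnn
      have t4 : ‖(u1 r * (starRingEnd ℂ) (gp r - v0 r))‖ ≤ K1 * r ^ (-γ) * (Eg r * r ^ ((1/2:ℝ))) := by
        rw [norm_mul, Complex.norm_conj]
        exact mul_le_mul hu1b hga' (norm_nonneg _) (mul_nonneg hK1nn hrg)
      have t5 : ‖((fm r - u1 r) * (starRingEnd ℂ) (v0 r))‖ ≤ Ef r * r ^ ((1/2:ℝ)) * (L0 * r ^ (-γ)) := by
        rw [norm_mul, Complex.norm_conj]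
        exact mul_le_mul hfb' hv0b (norm_nonneg _) hEfnn
      have t6 : ‖((fm r - u1 r) * (starRingEnd ℂ) (gp r - v0 r))‖ ≤ Ef r * r ^ ((1/2:ℝ)) * (Eg r * r ^ ((1/2:ℝ))) := by
        rw [norm_mul, Complex.norm_conj]
        exact mul_le_mul hfb' hga' (norm_nonneg _) hEfnn
      simp only [hR]
      calc ‖(u0 r * (starRingEnd ℂ) (gm r - v1 r) + (fp r - u0 r) * (starRingEnd ℂ) (v1 r)
              + (fp r - u0 r) * (starRingEnd ℂ) (gm r - v1 r)
              - u1 r * (starRingEnd ℂ) (gp r - v0 r) - (fm r - u1 r) * (starRingEnd ℂ) (v0 r)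
              - (fm r - u1 r) * (starRingEnd ℂ) (gp r - v0 r))‖
          ≤ ‖(u0 r * (starRingEnd ℂ) (gm r - v1 r) + (fp r - u0 r) * (starRingEnd ℂ) (v1 r)
              + (fp r - u0 r) * (starRingEnd ℂ) (gm r - v1 r)
              - u1 r * (starRingEnd ℂ) (gp r - v0 r) - (fm r - u1 r) * (starRingEnd ℂ) (v0 r))‖
              + ‖((fm r - u1 r) * (starRingEnd ℂ) (gp r - v0 r))‖ := norm_sub_le _ _
        _ ≤ ‖(u0 r * (starRingEnd ℂ) (gm r - v1 r) + (fp r - u0 r) * (starRingEnd ℂ) (v1 r)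
              + (fp r - u0 r) * (starRingEnd ℂ) (gm r - v1 r)
              - u1 r * (starRingEnd ℂ) (gp r - v0 r))‖
              + ‖((fm r - u1 r) * (starRingEnd ℂ) (v0 r))‖
              + ‖((fm r - u1 r) * (starRingEnd ℂ) (gp r - v0 r))‖ := by
            gcongr
            exact norm_sub_le _ _
        _ ≤ ‖(u0 r * (starRingEnd ℂ) (gm r - v1 r) + (fp r - u0 r) * (starRingEnd ℂ) (v1 r)
              + (fp r - u0 r) * (starRingEnd ℂ) (gm r - v1 r))‖
              + ‖(u1 r * (starRingEnd ℂ) (gp r - v0 r))‖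
              + ‖((fm r - u1 r) * (starRingEnd ℂ) (v0 r))‖
              + ‖((fm r - u1 r) * (starRingEnd ℂ) (gp r - v0 r))‖ := by
            gcongr ?_ + _ + _
            exact norm_sub_le _ _
        _ ≤ ‖(u0 r * (starRingEnd ℂ) (gm r - v1 r))‖
              + ‖((fp r - u0 r) * (starRingEnd ℂ) (v1 r))‖
              + ‖((fp r - u0 r) * (starRingEnd ℂ) (gm r - v1 r))‖
              + ‖(u1 r * (starRingEnd ℂ) (gp r - v0 r))‖
              + ‖((fm r - u1 r) * (starRingEnd ℂ) (v0 r))‖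
              + ‖((fm r - u1 r) * (starRingEnd ℂ) (gp r - v0 r))‖ := by
            gcongr ?_ + _ + _ + _
            exact le_trans (norm_add_le _ _)
              (add_le_add_left (norm_add_le _ _) _)
        _ ≤ Φ r := by
            simp only [hPhi]
            have := add_le_add (add_le_add (add_le_add (add_le_add (add_le_add t1 t2) t3) t4) t5) t6
            linarith
    have hid : Tendsto (fun r : ℝ => r) l (nhds 0) :=
      (tendsto_id : Tendsto id (nhds (0:ℝ)) (nhds 0)).mono_left nhdsWithin_le_nhds
    have htp : Tendsto (fun r : ℝ => r ^ ((1/2:ℝ) - γ)) l (nhds 0) := by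
      have hcont : ContinuousAt (fun x : ℝ => x ^ ((1/2:ℝ) - γ)) 0 :=
        Real.continuousAt_rpow_const 0 _ (Or.inr (by linarith))
      have h0 := hcont.tendsto
      rw [Real.zero_rpow (by intro h; linarith [h] : (1/2:ℝ) - γ ≠ 0)] at h0
      exact h0.mono_left nhdsWithin_le_nhds
    have hPsi : Tendsto (fun r : ℝ =>
        K0 * (Eg r * r ^ ((1/2:ℝ) - γ)) + L1 * (Ef r * r ^ ((1/2:ℝ) - γ))
          + Ef r * Eg r * r + K1 * (Eg r * r ^ ((1/2:ℝ) - γ)) + L0 * (Ef r * r ^ ((1/2:ℝ) - γ))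
          + Ef r * Eg r * r) l (nhds 0) := by
      have e1 : Tendsto (fun r : ℝ => Eg r * r ^ ((1/2:ℝ) - γ)) l (nhds 0) := by
        simpa using hg'.mul htp
      have e2 : Tendsto (fun r : ℝ => Ef r * r ^ ((1/2:ℝ) - γ)) l (nhds 0) := by
        simpa using hf'.mul htp
      have e3 : Tendsto (fun r : ℝ => Ef r * Eg r * r) l (nhds 0) := by
        simpa using (hf'.mul hg').mul hid
      have c1 : Tendsto (fun r : ℝ => K0 * (Eg r * r ^ ((1/2:ℝ) - γ))) l (nhds 0) := by
        simpa using (tendsto_const_nhds (x := K0)).mul e1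
      have c2 : Tendsto (fun r : ℝ => L1 * (Ef r * r ^ ((1/2:ℝ) - γ))) l (nhds 0) := by
        simpa using (tendsto_const_nhds (x := L1)).mul e2
      have c3 : Tendsto (fun r : ℝ => K1 * (Eg r * r ^ ((1/2:ℝ) - γ))) l (nhds 0) := by
        simpa using (tendsto_const_nhds (x := K1)).mul e1
      have c4 : Tendsto (fun r : ℝ => L0 * (Ef r * r ^ ((1/2:ℝ) - γ))) l (nhds 0) := by
        simpa using (tendsto_const_nhds (x := L0)).mul e2
      simpa using ((((c1.add c2).add e3).add c3).add c4).add e3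
    have hPhiTends : Tendsto Φ l (nhds 0) := by
      refine hPsi.congr' ?_
      filter_upwards [self_mem_nhdsWithin] with r hr
      have hr' : (0:ℝ) < r := hr
      have hp : r ^ (-γ) * r ^ ((1/2:ℝ)) = r ^ ((1/2:ℝ) - γ) := by
        rw [← Real.rpow_add hr']; ring_nf
      have hp2 : r ^ ((1/2:ℝ)) * r ^ ((1/2:ℝ)) = r := by
        rw [← Real.rpow_add hr']; norm_num
      simp only [hPhi]
      linear_combination (-(K0 * Eg r) - K1 * Eg r - L0 * Ef r - L1 * Ef r) * hp
        + (-2 * (Ef r * Eg r)) * hp2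
    exact squeeze_zero_norm' hbound hPhiTends
  have := (tendsto_const_nhds.add hRlim : Tendsto (fun r => W + R r) l (nhds (W + 0)))
  rw [add_zero] at this
  refine this.congr' ?_
  filter_upwards [self_mem_nhdsWithin] with r hr
  exact (hdecomp r hr).symm
end
end

section
/- Let M be a real 2×2 matrix with trace M = 0 and det M = 0 (equivalently M² = 0), let A = (A⁺, A⁻), Ã = (Ã⁺, Ã⁻) ∈ ℂ², and let f = (f⁺,f⁻), g = (g⁺,g⁻) : (0,∞) → ℂ² satisfy lim_{r→0⁺} r^{−1/2} | f(r) − (M log r + I₂)·(A⁺, A⁻) | = 0 and lim_{r→0⁺} r^{−1/2} | g(r) − (M log r + I₂)·(Ã⁺, Ã⁻) | = 0. Then lim_{r→0⁺} [ f⁺(r) conj(g⁻(r)) − f⁻(r) conj(g⁺(r)) ] = A⁺ conj(Ã⁻) − A⁻ conj(Ã⁺). -/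
open MeasureTheory Real Filter

noncomputable section




private lemma aux_rhalf :
    Tendsto (fun r : ℝ => r ^ (1/2 : ℝ) * (1 + |Real.log r|))
      (nhdsWithin 0 (Set.Ioi 0)) (nhds 0) := by
  have h1 : Tendsto (fun r : ℝ => r ^ (1/2 : ℝ)) (nhdsWithin 0 (Set.Ioi 0)) (nhds 0) := by
    have hc : ContinuousAt (fun r : ℝ => r ^ (1/2:ℝ)) 0 :=
      Real.continuousAt_rpow_const 0 _ (Or.inr (by norm_num))
    have := hc.tendsto
    simp only [Real.zero_rpow (by norm_num : (1/2:ℝ) ≠ 0)] at this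
    exact this.mono_left nhdsWithin_le_nhds
  have h2 := (tendsto_log_mul_rpow_nhdsGT_zero (by norm_num : (0:ℝ) < 1/2)).abs
  have h3 : Tendsto (fun r : ℝ => r ^ (1/2:ℝ) + |Real.log r * r ^ (1/2:ℝ)|)
      (nhdsWithin 0 (Set.Ioi 0)) (nhds 0) := by simpa using h1.add h2
  refine h3.congr' ?_
  filter_upwards [self_mem_nhdsWithin] with r hr
  have hr' : (0:ℝ) < r := hr
  rw [abs_mul, abs_of_nonneg (Real.rpow_nonneg hr'.le _)]
  ring

private lemma aux_prod1 (E : ℝ → ℝ) (φ ψ : ℝ → ℂ) (C : ℝ)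
    (hE : Tendsto (fun r => E r * r ^ (-(1/2) : ℝ)) (nhdsWithin 0 (Set.Ioi 0)) (nhds 0))
    (hφ : ∀ r ∈ Set.Ioi (0:ℝ), ‖φ r‖ ≤ E r)
    (hψ : ∀ r ∈ Set.Ioi (0:ℝ), ‖ψ r‖ ≤ C * (1 + |Real.log r|)) :
    Tendsto (fun r => φ r * ψ r) (nhdsWithin 0 (Set.Ioi 0)) (nhds 0) := by
  have hg : Tendsto (fun r : ℝ =>
      (E r * r ^ (-(1/2):ℝ)) * (C * (r ^ (1/2:ℝ) * (1 + |Real.log r|))))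
      (nhdsWithin 0 (Set.Ioi 0)) (nhds 0) := by
    simpa using hE.mul (aux_rhalf.const_mul C)
  apply squeeze_zero_norm' _ hg
  filter_upwards [self_mem_nhdsWithin] with r hr
  have hr' : (0:ℝ) < r := hr
  have h1 := hφ r hr
  have h0 : 0 ≤ E r := le_trans (norm_nonneg _) h1
  have h2 := hψ r hr
  have hrr : r ^ (-(1/2):ℝ) * r ^ (1/2:ℝ) = 1 := by
    rw [← Real.rpow_add hr']; norm_num
  have key : (E r * r ^ (-(1/2):ℝ)) * (C * (r ^ (1/2:ℝ) * (1 + |Real.log r|)))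
      = E r * (C * (1 + |Real.log r|)) := by
    have : (E r * r ^ (-(1/2):ℝ)) * (C * (r ^ (1/2:ℝ) * (1 + |Real.log r|)))
        = (E r * (C * (1 + |Real.log r|))) * (r ^ (-(1/2):ℝ) * r ^ (1/2:ℝ)) := by ring
    rw [this, hrr, mul_one]
  rw [key]
  calc ‖φ r * ψ r‖ = ‖φ r‖ * ‖ψ r‖ := by
        simp
    _ ≤ E r * (C * (1 + |Real.log r|)) :=
        mul_le_mul h1 h2 (norm_nonneg _) h0

private lemma aux_prod2 (E F : ℝ → ℝ) (φ ψ : ℝ → ℂ)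
    (hE : Tendsto (fun r => E r * r ^ (-(1/2) : ℝ)) (nhdsWithin 0 (Set.Ioi 0)) (nhds 0))
    (hF : Tendsto (fun r => F r * r ^ (-(1/2) : ℝ)) (nhdsWithin 0 (Set.Ioi 0)) (nhds 0))
    (hφ : ∀ r ∈ Set.Ioi (0:ℝ), ‖φ r‖ ≤ E r)
    (hψ : ∀ r ∈ Set.Ioi (0:ℝ), ‖ψ r‖ ≤ F r) :
    Tendsto (fun r => φ r * ψ r) (nhdsWithin 0 (Set.Ioi 0)) (nhds 0) := by
  have hr0 : Tendsto (fun r : ℝ => r) (nhdsWithin 0 (Set.Ioi 0)) (nhds 0) :=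
    tendsto_id.mono_left nhdsWithin_le_nhds
  have hg : Tendsto (fun r : ℝ =>
      (E r * r ^ (-(1/2):ℝ)) * ((F r * r ^ (-(1/2):ℝ)) * r))
      (nhdsWithin 0 (Set.Ioi 0)) (nhds 0) := by
    simpa using hE.mul (hF.mul hr0)
  apply squeeze_zero_norm' _ hg
  filter_upwards [self_mem_nhdsWithin] with r hr
  have hr' : (0:ℝ) < r := hr
  have h1 := hφ r hr
  have h0 : 0 ≤ E r := le_trans (norm_nonneg _) h1
  have h2 := hψ r hr
  have hrr : (r ^ (-(1/2):ℝ) * r ^ (-(1/2):ℝ)) * r = 1 := by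
    rw [← Real.rpow_add hr']
    norm_num [Real.rpow_neg_one, inv_mul_cancel₀ hr'.ne']
  have key : (E r * r ^ (-(1/2):ℝ)) * ((F r * r ^ (-(1/2):ℝ)) * r) = E r * F r := by
    have : (E r * r ^ (-(1/2):ℝ)) * ((F r * r ^ (-(1/2):ℝ)) * r)
        = (E r * F r) * ((r ^ (-(1/2):ℝ) * r ^ (-(1/2):ℝ)) * r) := by ring
    rw [this, hrr, mul_one]
  rw [key]
  calc ‖φ r * ψ r‖ = ‖φ r‖ * ‖ψ r‖ := by
        simp
    _ ≤ E r * F r := mul_le_mul h1 h2 (norm_nonneg _) h0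


private lemma aux_le_sqrt1 (a b : ℝ) (ha : 0 ≤ a) : a ≤ Real.sqrt (a^2 + b^2) :=
  calc a = Real.sqrt (a^2) := (Real.sqrt_sq ha).symm
    _ ≤ Real.sqrt (a^2 + b^2) := Real.sqrt_le_sqrt (by nlinarith [sq_nonneg b])

private lemma aux_le_sqrt2 (a b : ℝ) (hb : 0 ≤ b) : b ≤ Real.sqrt (a^2 + b^2) :=
  calc b = Real.sqrt (b^2) := (Real.sqrt_sq hb).symm
    _ ≤ Real.sqrt (a^2 + b^2) := Real.sqrt_le_sqrt (by nlinarith [sq_nonneg a])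

private lemma aux_abs_affine (A c : ℂ) (r : ℝ) :
    ‖A + (r:ℂ) * c‖ ≤ (‖A‖ + ‖c‖) * (1 + |r|) := by
  calc ‖A + (r:ℂ)*c‖ ≤ ‖A‖ + ‖(r:ℂ)*c‖ :=
        norm_add_le _ _
    _ = ‖A‖ + |r| * ‖c‖ := by rw [norm_mul, Complex.norm_real, Real.norm_eq_abs]
    _ ≤ (‖A‖ + ‖c‖) * (1 + |r|) := by
        nlinarith [norm_nonneg A, norm_nonneg c, abs_nonneg r]

private lemma aux_key (L Ap Am Bp' Bm' m00 m01 m10 m11 : ℂ)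
    (htr : m00 + m11 = 0) (hdet : m00*m11 - m01*m10 = 0) :
    (Ap + L*(m00*Ap+m01*Am)) * (Bm' + L*(m10*Bp'+m11*Bm'))
      - (Am + L*(m10*Ap+m11*Am)) * (Bp' + L*(m00*Bp'+m01*Bm'))
      = Ap*Bm' - Am*Bp' := by
  linear_combination (L*(Ap*Bm' - Am*Bp')) * htr + (L^2*(Ap*Bm'-Am*Bp')) * hdet

private lemma aux_combined (Ap Am Bp Bm cA0 cA1 cB0 cB1 : ℂ) (fp fm gp gm : ℝ → ℂ)
    (hid : ∀ r : ℝ,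
      (Ap + (Real.log r : ℂ) * cA0) * (starRingEnd ℂ) (Bm + (Real.log r : ℂ) * cB1)
        - (Am + (Real.log r : ℂ) * cA1) * (starRingEnd ℂ) (Bp + (Real.log r : ℂ) * cB0)
        = Ap * (starRingEnd ℂ) Bm - Am * (starRingEnd ℂ) Bp)
    (hf : Tendsto (fun r : ℝ =>
        Real.sqrt (‖fp r - (Ap + (Real.log r : ℂ) * cA0)‖ ^ 2
          + ‖fm r - (Am + (Real.log r : ℂ) * cA1)‖ ^ 2) * r ^ (-(1/2) : ℝ))
        (nhdsWithin 0 (Set.Ioi 0)) (nhds 0))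
    (hg : Tendsto (fun r : ℝ =>
        Real.sqrt (‖gp r - (Bp + (Real.log r : ℂ) * cB0)‖ ^ 2
          + ‖gm r - (Bm + (Real.log r : ℂ) * cB1)‖ ^ 2) * r ^ (-(1/2) : ℝ))
        (nhdsWithin 0 (Set.Ioi 0)) (nhds 0)) :
    Tendsto (fun r : ℝ => fp r * (starRingEnd ℂ) (gm r) - fm r * (starRingEnd ℂ) (gp r))
      (nhdsWithin 0 (Set.Ioi 0))
      (nhds (Ap * (starRingEnd ℂ) Bm - Am * (starRingEnd ℂ) Bp)) := by
  set e0 : ℝ → ℂ := fun r => fp r - (Ap + (Real.log r : ℂ) * cA0) with he0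
  set e1 : ℝ → ℂ := fun r => fm r - (Am + (Real.log r : ℂ) * cA1) with he1
  set f0 : ℝ → ℂ := fun r => gp r - (Bp + (Real.log r : ℂ) * cB0) with hf0
  set f1 : ℝ → ℂ := fun r => gm r - (Bm + (Real.log r : ℂ) * cB1) with hf1
  set Ef : ℝ → ℝ := fun r => Real.sqrt (‖e0 r‖ ^ 2 + ‖e1 r‖ ^ 2)
    with hEfd
  set Eg : ℝ → ℝ := fun r => Real.sqrt (‖f0 r‖ ^ 2 + ‖f1 r‖ ^ 2)
    with hEgd
  have hEf : Tendsto (fun r : ℝ => Ef r * r ^ (-(1/2) : ℝ))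
      (nhdsWithin 0 (Set.Ioi 0)) (nhds 0) := hf
  have hEg : Tendsto (fun r : ℝ => Eg r * r ^ (-(1/2) : ℝ))
      (nhdsWithin 0 (Set.Ioi 0)) (nhds 0) := hg
  have hbe0 : ∀ r ∈ Set.Ioi (0:ℝ), ‖e0 r‖ ≤ Ef r :=
    fun r _ => aux_le_sqrt1 _ _ (norm_nonneg _)
  have hbe1 : ∀ r ∈ Set.Ioi (0:ℝ), ‖e1 r‖ ≤ Ef r :=
    fun r _ => aux_le_sqrt2 _ _ (norm_nonneg _)
  have hbf0 : ∀ r ∈ Set.Ioi (0:ℝ), ‖(starRingEnd ℂ) (f0 r)‖ ≤ Eg r :=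
    fun r _ => by
      rw [Complex.norm_conj]; exact aux_le_sqrt1 _ _ (norm_nonneg _)
  have hbf1 : ∀ r ∈ Set.Ioi (0:ℝ), ‖(starRingEnd ℂ) (f1 r)‖ ≤ Eg r :=
    fun r _ => by
      rw [Complex.norm_conj]; exact aux_le_sqrt2 _ _ (norm_nonneg _)
  -- the six small terms
  have h1 : Tendsto (fun r : ℝ => e0 r * (starRingEnd ℂ) (Bm + (Real.log r : ℂ) * cB1))
      (nhdsWithin 0 (Set.Ioi 0)) (nhds 0) := by
    refine aux_prod1 Ef _ _ (‖Bm‖ + ‖cB1‖) hEf hbe0 ?_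
    intro r _; rw [Complex.norm_conj]; exact aux_abs_affine _ _ _
  have h2 : Tendsto (fun r : ℝ => (starRingEnd ℂ) (f1 r) * (Ap + (Real.log r : ℂ) * cA0))
      (nhdsWithin 0 (Set.Ioi 0)) (nhds 0) := by
    refine aux_prod1 Eg _ _ (‖Ap‖ + ‖cA0‖) hEg hbf1 ?_
    intro r _; exact aux_abs_affine _ _ _
  have h3 : Tendsto (fun r : ℝ => e0 r * (starRingEnd ℂ) (f1 r))
      (nhdsWithin 0 (Set.Ioi 0)) (nhds 0) := aux_prod2 Ef Eg _ _ hEf hEg hbe0 hbf1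
  have h4 : Tendsto (fun r : ℝ => e1 r * (starRingEnd ℂ) (Bp + (Real.log r : ℂ) * cB0))
      (nhdsWithin 0 (Set.Ioi 0)) (nhds 0) := by
    refine aux_prod1 Ef _ _ (‖Bp‖ + ‖cB0‖) hEf hbe1 ?_
    intro r _; rw [Complex.norm_conj]; exact aux_abs_affine _ _ _
  have h5 : Tendsto (fun r : ℝ => (starRingEnd ℂ) (f0 r) * (Am + (Real.log r : ℂ) * cA1))
      (nhdsWithin 0 (Set.Ioi 0)) (nhds 0) := by
    refine aux_prod1 Eg _ _ (‖Am‖ + ‖cA1‖) hEg hbf0 ?_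
    intro r _; exact aux_abs_affine _ _ _
  have h6 : Tendsto (fun r : ℝ => e1 r * (starRingEnd ℂ) (f0 r))
      (nhdsWithin 0 (Set.Ioi 0)) (nhds 0) := aux_prod2 Ef Eg _ _ hEf hEg hbe1 hbf0
  rw [← tendsto_sub_nhds_zero_iff]
  have key : ∀ r : ℝ,
      fp r * (starRingEnd ℂ) (gm r) - fm r * (starRingEnd ℂ) (gp r)
        - (Ap * (starRingEnd ℂ) Bm - Am * (starRingEnd ℂ) Bp)
      = (e0 r * (starRingEnd ℂ) (Bm + (Real.log r : ℂ) * cB1)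
          + (starRingEnd ℂ) (f1 r) * (Ap + (Real.log r : ℂ) * cA0)
          + e0 r * (starRingEnd ℂ) (f1 r))
        - (e1 r * (starRingEnd ℂ) (Bp + (Real.log r : ℂ) * cB0)
          + (starRingEnd ℂ) (f0 r) * (Am + (Real.log r : ℂ) * cA1)
          + e1 r * (starRingEnd ℂ) (f0 r)) := by
    intro r
    have hh := hid r
    simp only [he0, he1, hf0, hf1, map_sub]
    linear_combination hh
  have h7 := (((h1.add h2).add h3).sub ((h4.add h5).add h6))
  simp only [add_zero, sub_self] at h7
  exact Tendsto.congr (fun r => (key r).symm) h7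

/-- boundary limit of the Wronskian-type expression in the critical
case δ = 0. -/
theorem wronskian_limit_critical (M : Matrix (Fin 2) (Fin 2) ℝ)
    (hMtr : M.trace = 0) (hMdet : M.det = 0) (Ap Am Bp Bm : ℂ) (fp fm gp gm : ℝ → ℂ)
    (hf : Tendsto (fun r : ℝ =>
        Real.sqrt
          (‖fp r -
              ((Real.log r • M + 1).map (fun t => (t : ℂ))).mulVec ![Ap, Am] 0‖ ^ 2 +
            ‖fm r -
              ((Real.log r • M + 1).map (fun t => (t : ℂ))).mulVec ![Ap, Am] 1‖ ^ 2) *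
          r ^ (-(1 / 2 : ℝ))) (nhdsWithin 0 (Set.Ioi 0)) (nhds 0))
    (hg : Tendsto (fun r : ℝ =>
        Real.sqrt
          (‖gp r -
              ((Real.log r • M + 1).map (fun t => (t : ℂ))).mulVec ![Bp, Bm] 0‖ ^ 2 +
            ‖gm r -
              ((Real.log r • M + 1).map (fun t => (t : ℂ))).mulVec ![Bp, Bm] 1‖ ^ 2) *
          r ^ (-(1 / 2 : ℝ))) (nhdsWithin 0 (Set.Ioi 0)) (nhds 0)) :
    Tendsto (fun r : ℝ => fp r * (starRingEnd ℂ) (gm r) - fm r * (starRingEnd ℂ) (gp r))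
      (nhdsWithin 0 (Set.Ioi 0))
      (nhds (Ap * (starRingEnd ℂ) Bm - Am * (starRingEnd ℂ) Bp)) := by
  have htrC : (M 0 0 : ℂ) + (M 1 1 : ℂ) = 0 := by
    have h : M 0 0 + M 1 1 = 0 := by simpa [Matrix.trace, Fin.sum_univ_two] using hMtr
    exact_mod_cast h
  have hdetC : (M 0 0 : ℂ) * (M 1 1 : ℂ) - (M 0 1 : ℂ) * (M 1 0 : ℂ) = 0 := by
    have h : M 0 0 * M 1 1 - M 0 1 * M 1 0 = 0 := by simpa [Matrix.det_fin_two] using hMdet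
    exact_mod_cast h
  have hmv0 : ∀ (r : ℝ) (X Y : ℂ),
      ((Real.log r • M + 1).map (fun t => (t : ℂ))).mulVec ![X, Y] 0
        = X + (Real.log r : ℂ) * ((M 0 0 : ℂ) * X + (M 0 1 : ℂ) * Y) := by
    intro r X Y
    simp [Matrix.mulVec, dotProduct, Fin.sum_univ_two, Matrix.map_apply,
      Matrix.add_apply, Matrix.smul_apply, Matrix.one_apply, smul_eq_mul]
    ring
  have hmv1 : ∀ (r : ℝ) (X Y : ℂ),
      ((Real.log r • M + 1).map (fun t => (t : ℂ))).mulVec ![X, Y] 1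
        = Y + (Real.log r : ℂ) * ((M 1 0 : ℂ) * X + (M 1 1 : ℂ) * Y) := by
    intro r X Y
    simp [Matrix.mulVec, dotProduct, Fin.sum_univ_two, Matrix.map_apply,
      Matrix.add_apply, Matrix.smul_apply, Matrix.one_apply, smul_eq_mul]
    ring
  have hid : ∀ r : ℝ,
      (Ap + (Real.log r : ℂ) * ((M 0 0 : ℂ) * Ap + (M 0 1 : ℂ) * Am)) *
          (starRingEnd ℂ) (Bm + (Real.log r : ℂ) * ((M 1 0 : ℂ) * Bp + (M 1 1 : ℂ) * Bm))
        - (Am + (Real.log r : ℂ) * ((M 1 0 : ℂ) * Ap + (M 1 1 : ℂ) * Am)) *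
          (starRingEnd ℂ) (Bp + (Real.log r : ℂ) * ((M 0 0 : ℂ) * Bp + (M 0 1 : ℂ) * Bm))
        = Ap * (starRingEnd ℂ) Bm - Am * (starRingEnd ℂ) Bp := by
    intro r
    have hk := aux_key (Real.log r : ℂ) Ap Am ((starRingEnd ℂ) Bp) ((starRingEnd ℂ) Bm)
      (M 0 0 : ℂ) (M 0 1 : ℂ) (M 1 0 : ℂ) (M 1 1 : ℂ) htrC hdetC
    simp only [map_add, map_mul, Complex.conj_ofReal]
    linear_combination hk
  refine aux_combined Ap Am Bp Bm _ _ _ _ fp fm gp gm hid ?_ ?_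
  · refine hf.congr fun r => ?_
    rw [hmv0 r Ap Am, hmv1 r Ap Am]
  · refine hg.congr fun r => ?_
    rw [hmv0 r Bp Bm, hmv1 r Bp Bm]
end
end
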